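/- arXiv:1207.4280 — 4 statements merged into one kernel-verified Lean document; each statement's English description precedes it below -/
import Mathlib

section
/- Let m ≥ 2 and let a_1, …, a_m be positive integers with even sum. Then the Kostka numbers satisfy Schubert's recursion: K(a_1, …, a_m) = K(a_1, …, a_{m-2}, a_{m-1} + a_m) + K(a_1, …, a_{m-2}, a_{m-1} − 1, a_m − 1). -/
/-- The Kostka number `K(a₁,…,aₘ)` of the two-rowed rectangular shape `(s,s)`,
where `2s = a₁ + ⋯ + aₘ`: the number of semistandard Young tableaux with two rows
of length `s` (entries weakly increasing along rows, strictly increasing down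
columns) containing exactly `aᵢ` entries equal to `i`.  A tableau is encoded as
`T : Fin 2 → Fin s → Fin m`, where the value `T r c` encodes the entry `(T r c) + 1`
in row `r`, column `c`.  If the sum of the entries is odd, the Kostka number is `0`. -/
noncomputable def kostka (a : List ℕ) : ℕ :=
  if a.sum % 2 = 0 then
    Nat.card {T : Fin 2 → Fin (a.sum / 2) → Fin a.length //
      (∀ r, Monotone (T r)) ∧
      (∀ c, T 0 c < T 1 c) ∧
      (∀ i : Fin a.length,
        Nat.card {p : Fin 2 × Fin (a.sum / 2) // T p.1 p.2 = i} = a.get i)}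
  else 0


private lemma count_range (N k l : ℕ) :
    (∑ i ∈ Finset.range N, if k ≤ i ∧ i < l then 1 else 0) = min l N - min k N := by
  induction N with
  | zero => simp
  | succ N ih => rw [Finset.sum_range_succ, ih]; split_ifs <;> omega

private lemma count_fin (N k l : ℕ) :
    (∑ c : Fin N, if k ≤ c.val ∧ c.val < l then 1 else 0) = min l N - min k N := by
  rw [Fin.sum_univ_eq_sum_range (fun i => if k ≤ i ∧ i < l then 1 else 0)]
  exact count_range N k l

private def cnt {s m : ℕ} (T : Fin 2 → Fin s → Fin m) (i : Fin m) : ℕ :=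
  (∑ c : Fin s, if T 0 c = i then 1 else 0) + (∑ c : Fin s, if T 1 c = i then 1 else 0)

private lemma card_cnt {s m : ℕ} (T : Fin 2 → Fin s → Fin m) (i : Fin m) :
    Nat.card {p : Fin 2 × Fin s // T p.1 p.2 = i} = cnt T i := by
  rw [Nat.card_eq_fintype_card, Fintype.card_subtype, Finset.card_filter,
    Fintype.sum_prod_type, Fin.sum_univ_two]
  rfl

private lemma sum_ite_congr' {N : ℕ} (p q : Fin N → Prop) [DecidablePred p] [DecidablePred q]
    (h : ∀ c, p c ↔ q c) :
    (∑ c : Fin N, if p c then 1 else 0) = ∑ c : Fin N, if q c then 1 else 0 :=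
  Finset.sum_congr rfl (fun c _ => by simp only [h c])

private lemma sum_ite_or {N : ℕ} (p q : Fin N → Prop) [DecidablePred p] [DecidablePred q]
    (hdis : ∀ c, ¬ (p c ∧ q c)) :
    (∑ c : Fin N, if p c ∨ q c then 1 else 0)
      = (∑ c : Fin N, if p c then 1 else 0) + (∑ c : Fin N, if q c then 1 else 0) := by
  rw [← Finset.sum_add_distrib]
  refine Finset.sum_congr rfl (fun c _ => ?_)
  by_cases hp : p c <;> by_cases hq : q c <;> simp [hp, hq]
  exact absurd ⟨hp, hq⟩ (hdis c)

private lemma sum_ite_le {N : ℕ} (p : Fin N → Prop) [DecidablePred p] :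
    (∑ c : Fin N, if p c then 1 else 0) ≤ N := by
  calc (∑ c : Fin N, if p c then 1 else 0) ≤ ∑ _c : Fin N, 1 :=
        Finset.sum_le_sum (fun c _ => by split_ifs <;> omega)
    _ = N := by simp

private lemma suffix_iff {N m : ℕ} (h : Fin N → Fin m) (v : Fin m) (K : ℕ)
    (hmono : Monotone h) (htop : ∀ c, h c ≤ v)
    (hcount : (∑ c : Fin N, if h c = v then 1 else 0) = K) (c : Fin N) :
    h c = v ↔ N - K ≤ c.val := by
  have hcN := c.isLt
  constructor
  · intro hc
    by_contra hlt
    push_neg at hlt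
    have hsub : ∀ c' : Fin N, c.val ≤ c'.val → h c' = v := fun c' hc' =>
      le_antisymm (htop c') (hc ▸ hmono (show c ≤ c' from hc'))
    have hle : (∑ c' : Fin N, if c.val ≤ c'.val ∧ c'.val < N then 1 else 0)
        ≤ (∑ c' : Fin N, if h c' = v then 1 else 0) := by
      refine Finset.sum_le_sum (fun c' _ => ?_)
      split_ifs with h1 h2
      · omega
      · exact absurd (hsub c' h1.1) h2
      all_goals omega
    rw [hcount, count_fin] at hle
    omega
  · intro hge
    by_contra hne
    have hlt : h c < v := lt_of_le_of_ne (htop c) hne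
    have hsub : ∀ c' : Fin N, h c' = v → c.val + 1 ≤ c'.val := by
      intro c' hc'
      by_contra hh
      push_neg at hh
      have := hmono (show c' ≤ c from by omega)
      rw [hc'] at this
      exact absurd (lt_of_le_of_lt this hlt) (lt_irrefl v)
    have hle : (∑ c' : Fin N, if h c' = v then 1 else 0)
        ≤ (∑ c' : Fin N, if c.val + 1 ≤ c'.val ∧ c'.val < N then 1 else 0) := by
      refine Finset.sum_le_sum (fun c' _ => ?_)
      split_ifs with h1 h2
      · omega
      · exact absurd ⟨hsub c' h1, c'.isLt⟩ h2
      all_goals omega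
    rw [hcount, count_fin] at hle
    omega

private lemma card_split {α : Type*} [Finite α] (P Q : α → Prop) :
    Nat.card {z : α // P z} = Nat.card {z : α // P z ∧ Q z} + Nat.card {z : α // P z ∧ ¬ Q z} := by
  classical
  rw [← Nat.card_sum]
  refine Nat.card_congr ⟨fun z => if h : Q z.1 then Sum.inl ⟨z.1, z.2, h⟩ else Sum.inr ⟨z.1, z.2, h⟩,
    Sum.elim (fun z => ⟨z.1, z.2.1⟩) (fun z => ⟨z.1, z.2.1⟩), fun z => ?_, fun z => ?_⟩
  · by_cases h : Q z.1 <;> simp [h]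
  · rcases z with z | z
    · simp [z.2.2]
    · simp [z.2.2]

private lemma cnt_congr {s m m' : ℕ} (T : Fin 2 → Fin s → Fin m) (T' : Fin 2 → Fin s → Fin m')
    (i : Fin m) (i' : Fin m') (h : ∀ r c, T r c = i ↔ T' r c = i') : cnt T i = cnt T' i' := by
  unfold cnt
  rw [sum_ite_congr' _ _ (h 0), sum_ite_congr' _ _ (h 1)]

private lemma cnt_split {s m m' : ℕ} (T : Fin 2 → Fin s → Fin m) (T' : Fin 2 → Fin s → Fin m')
    (i : Fin m) (i1 i2 : Fin m') (hne : i1 ≠ i2)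
    (h : ∀ r c, T r c = i ↔ (T' r c = i1 ∨ T' r c = i2)) :
    cnt T i = cnt T' i1 + cnt T' i2 := by
  have hdis : ∀ r (c : Fin s), ¬ (T' r c = i1 ∧ T' r c = i2) := by
    rintro r c ⟨h1, h2⟩; exact hne (h1 ▸ h2 ▸ rfl)
  unfold cnt
  rw [sum_ite_congr' _ _ (h 0), sum_ite_congr' _ _ (h 1),
    sum_ite_or _ _ (hdis 0), sum_ite_or _ _ (hdis 1)]
  omega

private def mrg {n : ℕ} (v : Fin (n + 2)) : Fin (n + 1) := ⟨min v.val n, by omega⟩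

@[simp] private lemma mrg_val {n : ℕ} (v : Fin (n + 2)) : (mrg v).val = min v.val n := rfl

@[simp] private lemma val_mk' {N a : ℕ} (h : a < N) : ((⟨a, h⟩ : Fin N)).val = a := rfl

private lemma fin2cases (r : Fin 2) : r = 0 ∨ r = 1 := by omega

/-- In a two-row tableau, row 0 values are `< n+1` (can't be the largest letter). -/
private lemma row0_lt {s n : ℕ} (T : Fin 2 → Fin s → Fin (n + 2))
    (hc : ∀ c, T 0 c < T 1 c) (c : Fin s) : (T 0 c).val < n + 1 := by
  have h1 := (T 1 c).isLt
  have h2 := hc c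
  rw [Fin.lt_def] at h2
  omega

/-- If additionally the top-right entry is not `n`, then all row-0 values are `< n`. -/
private lemma row0_lt' {t n : ℕ} (T : Fin 2 → Fin (t + 1) → Fin (n + 2))
    (hm : Monotone (T 0)) (hc : ∀ c, T 0 c < T 1 c)
    (hlast : ¬ ((T 0 (Fin.last t)).val = n)) (c : Fin (t + 1)) : (T 0 c).val < n := by
  have h1 := row0_lt T hc c
  rcases eq_or_lt_of_le (Nat.lt_succ_iff.mp h1) with h | h
  · exfalso
    have h2 := hm (Fin.le_last c)
    have h3 := row0_lt T hc (Fin.last t)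
    rw [Fin.le_def] at h2
    omega
  · exact h

/-- Row-1 values equal to the top value form a suffix of known length. -/
private lemma row1_suffix {s m : ℕ} (T : Fin 2 → Fin s → Fin m) (hm1 : Monotone (T 1))
    (v : Fin m) (htop : ∀ c, T 1 c ≤ v) (hrow0 : ∀ c, T 0 c ≠ v) (K : ℕ)
    (hcnt : cnt T v = K) : K ≤ s ∧ ∀ c, (T 1 c = v ↔ s - K ≤ c.val) := by
  have h0 : (∑ c : Fin s, if T 0 c = v then 1 else 0) = 0 :=
    Finset.sum_eq_zero (fun c _ => if_neg (hrow0 c))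
  have h1 : (∑ c : Fin s, if T 1 c = v then 1 else 0) = K := by unfold cnt at hcnt; omega
  exact ⟨h1 ▸ sum_ite_le _, suffix_iff (T 1) v K hm1 htop h1⟩

section CardA
variable {n t x y : ℕ} {f g : ℕ → ℕ}

private lemma memA_fwd (hfg : ∀ k, k < n → f k = g k) (hfx : f n = x) (hfy : f (n + 1) = y)
    (hg : g n = x + y)
    (T : Fin 2 → Fin (t + 1) → Fin (n + 2))
    (hT : ((∀ r, Monotone (T r)) ∧ (∀ c, T 0 c < T 1 c) ∧ ∀ i, cnt T i = f i.val) ∧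
      ¬ ((T 0 (Fin.last t)).val = n)) :
    (∀ r, Monotone ((fun r c => mrg (T r c)) r)) ∧
    (∀ c, (fun r c => mrg (T r c)) 0 c < (fun r c => mrg (T r c)) 1 c) ∧
    (∀ i, cnt (fun r c => mrg (T r c)) i = g i.val) := by
  obtain ⟨⟨hm, hc, hcnt⟩, hlast⟩ := hT
  have d1 : ∀ c, (T 0 c).val < n := row0_lt' T (hm 0) hc hlast
  refine ⟨fun r => fun c c' hcc' => ?_, fun c => ?_, fun i => ?_⟩
  · have := hm r hcc'
    rw [Fin.le_def] at *
    simp only [mrg_val]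
    omega
  · have h1 := hc c
    have h2 := d1 c
    rw [Fin.lt_def] at *
    simp only [mrg_val]
    omega
  · have hiv := i.isLt
    rcases Nat.lt_or_ge i.val n with hi | hi
    · have e : cnt (fun r c => mrg (T r c)) i = cnt T ⟨i.val, by omega⟩ := by
        refine cnt_congr _ _ _ _ (fun r c => ?_)
        simp only [Fin.ext_iff, val_mk', mrg_val]
        omega
      rw [e, hcnt]
      exact hfg i.val hi
    · have hi' : i.val = n := by omega
      have e : cnt (fun r c => mrg (T r c)) i
          = cnt T ⟨n, by omega⟩ + cnt T ⟨n + 1, by omega⟩ := by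
        refine cnt_split _ _ _ _ _ (by simp only [Ne, Fin.ext_iff, val_mk']; omega)
          (fun r c => ?_)
        have := (T r c).isLt
        simp only [Fin.ext_iff, val_mk', mrg_val]
        omega
      rw [e, hcnt, hcnt]
      show f n + f (n + 1) = g i.val
      rw [hfx, hfy, hi', hg]


private lemma memA_bwd (hfg : ∀ k, k < n → f k = g k) (hfx : f n = x) (hfy : f (n + 1) = y)
    (hg : g n = x + y)
    (T : Fin 2 → Fin (t + 1) → Fin (n + 1))
    (hT : (∀ r, Monotone (T r)) ∧ (∀ c, T 0 c < T 1 c) ∧ ∀ i, cnt T i = g i.val) :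
    ((∀ r, Monotone ((![fun c => (T 0 c).castSucc,
        fun c => if c.val + y < t + 1 then (T 1 c).castSucc else Fin.last (n + 1)]) r)) ∧
     (∀ c, (![fun c => (T 0 c).castSucc,
        fun c => if c.val + y < t + 1 then (T 1 c).castSucc else Fin.last (n + 1)]) 0 c
        < (![fun c => (T 0 c).castSucc,
        fun c => if c.val + y < t + 1 then (T 1 c).castSucc else Fin.last (n + 1)]) 1 c) ∧
     (∀ i, cnt (![fun c => (T 0 c).castSucc,
        fun c => if c.val + y < t + 1 then (T 1 c).castSucc else Fin.last (n + 1)]) i = f i.val)) ∧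
    ¬ (((![fun c => (T 0 c).castSucc,
        fun c => if c.val + y < t + 1 then (T 1 c).castSucc else Fin.last (n + 1)]) 0
          (Fin.last t)).val = n) := by
  obtain ⟨hm, hc, hcnt⟩ := hT
  have e1 : ∀ c, (T 0 c).val < n := by
    intro c
    have h1 := (T 1 c).isLt
    have h2 := hc c
    rw [Fin.lt_def] at h2
    omega
  have hsuf := row1_suffix T (hm 1) ⟨n, by omega⟩
    (fun c => by rw [Fin.le_def]; exact Nat.lt_succ_iff.mp (T 1 c).isLt)
    (fun c h => by have := e1 c; rw [h, val_mk'] at this; omega)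
    (x + y) ((hcnt ⟨n, by omega⟩).trans hg)
  obtain ⟨hxyle, hsuf⟩ := hsuf
  refine ⟨⟨fun r => ?_, fun c => ?_, fun i => ?_⟩, ?_⟩
  · rcases fin2cases r with rfl | rfl
    · simp only [Matrix.cons_val_zero]
      exact fun c c' hcc' => Fin.castSucc_le_castSucc_iff.mpr (hm 0 hcc')
    · simp only [Matrix.cons_val_one, Matrix.head_cons, Matrix.cons_val_zero]
      intro c c' hcc'
      by_cases h1 : c'.val + y < t + 1
      · have h2 : c.val + y < t + 1 := by have := Fin.le_def.mp hcc'; omega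
        simp only [if_pos h1, if_pos h2]
        exact Fin.castSucc_le_castSucc_iff.mpr (hm 1 hcc')
      · simp only [if_neg h1]
        split_ifs <;> exact Fin.le_last _
  · simp only [Matrix.cons_val_zero, Matrix.cons_val_one, Matrix.head_cons]
    by_cases h1 : c.val + y < t + 1
    · simp only [if_pos h1]
      exact Fin.castSucc_lt_castSucc_iff.mpr (hc c)
    · simp only [if_neg h1]
      exact Fin.castSucc_lt_last _
  · have hiv := i.isLt
    show (∑ c : Fin (t+1), if (T 0 c).castSucc = i then 1 else 0)
      + (∑ c : Fin (t+1), if (if c.val + y < t + 1 then (T 1 c).castSucc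
          else Fin.last (n+1)) = i then 1 else 0) = f i.val
    rcases Nat.lt_or_ge i.val n with hi | hi
    · have e0 : (∑ c : Fin (t+1), if (T 0 c).castSucc = i then 1 else 0)
          = ∑ c : Fin (t+1), if T 0 c = ⟨i.val, by omega⟩ then 1 else 0 :=
        sum_ite_congr' _ _ (fun c => by
          simp only [Fin.ext_iff, Fin.coe_castSucc, val_mk'])
      have e1' : (∑ c : Fin (t+1), if (if c.val + y < t + 1 then (T 1 c).castSucc
            else Fin.last (n+1)) = i then 1 else 0)
          = ∑ c : Fin (t+1), if T 1 c = ⟨i.val, by omega⟩ then 1 else 0 := by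
        refine sum_ite_congr' _ _ (fun c => ?_)
        by_cases hcb : c.val + y < t + 1
        · simp only [if_pos hcb, Fin.ext_iff, Fin.coe_castSucc, val_mk']
        · have hTc : (T 1 c).val = n := by
            have := (hsuf c).mpr (by omega)
            rw [this, val_mk']
          simp only [if_neg hcb, Fin.ext_iff, Fin.val_last, val_mk', hTc]
          omega
      rw [e0, e1']
      have hcn : cnt T ⟨i.val, by omega⟩ = g i.val := hcnt _
      unfold cnt at hcn
      rw [hfg i.val hi]
      exact hcn
    · rcases Nat.lt_or_ge i.val (n + 1) with hi2 | hi2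
      · -- i.val = n
        have hi' : i.val = n := by omega
        have e0 : (∑ c : Fin (t+1), if (T 0 c).castSucc = i then 1 else 0) = 0 :=
          Finset.sum_eq_zero (fun c _ => by
            refine if_neg (fun h => ?_)
            rw [Fin.ext_iff, Fin.coe_castSucc] at h
            have := e1 c
            omega)
        have e1' : (∑ c : Fin (t+1), if (if c.val + y < t + 1 then (T 1 c).castSucc
              else Fin.last (n+1)) = i then 1 else 0)
            = ∑ c : Fin (t+1), if (t + 1) - (x + y) ≤ c.val ∧ c.val < (t + 1) - y
              then 1 else 0 := by
          refine sum_ite_congr' _ _ (fun c => ?_)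
          by_cases hcb : c.val + y < t + 1
          · have hiff := hsuf c
            simp only [Fin.ext_iff, val_mk'] at hiff
            simp only [if_pos hcb, Fin.ext_iff, Fin.coe_castSucc]
            omega
          · simp only [if_neg hcb, Fin.ext_iff, Fin.val_last]
            omega
        rw [e0, e1', count_fin, hi', hfx]
        omega
      · -- i.val = n + 1
        have hi' : i.val = n + 1 := by omega
        have e0 : (∑ c : Fin (t+1), if (T 0 c).castSucc = i then 1 else 0) = 0 :=
          Finset.sum_eq_zero (fun c _ => by
            refine if_neg (fun h => ?_)
            rw [Fin.ext_iff, Fin.coe_castSucc] at h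
            have := e1 c
            omega)
        have e1' : (∑ c : Fin (t+1), if (if c.val + y < t + 1 then (T 1 c).castSucc
              else Fin.last (n+1)) = i then 1 else 0)
            = ∑ c : Fin (t+1), if (t + 1) - y ≤ c.val ∧ c.val < t + 1 then 1 else 0 := by
          refine sum_ite_congr' _ _ (fun c => ?_)
          have hcc := c.isLt
          by_cases hcb : c.val + y < t + 1
          · have hlt := Nat.lt_succ_iff.mp (T 1 c).isLt
            simp only [if_pos hcb, Fin.ext_iff, Fin.coe_castSucc]
            omega
          · simp only [if_neg hcb, Fin.ext_iff, Fin.val_last]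
            omega
        rw [e0, e1', count_fin, hi', hfy]
        omega
  · -- top-right condition
    simp only [Matrix.cons_val_zero, Fin.coe_castSucc]
    have := e1 (Fin.last t)
    omega


private lemma invA_left (hfg : ∀ k, k < n → f k = g k) (hfx : f n = x) (hfy : f (n + 1) = y)
    (hg : g n = x + y)
    (T : Fin 2 → Fin (t + 1) → Fin (n + 2))
    (hT : ((∀ r, Monotone (T r)) ∧ (∀ c, T 0 c < T 1 c) ∧ ∀ i, cnt T i = f i.val) ∧
      ¬ ((T 0 (Fin.last t)).val = n)) :
    (![fun c => (mrg (T 0 c)).castSucc,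
      fun c => if c.val + y < t + 1 then (mrg (T 1 c)).castSucc else Fin.last (n + 1)]) = T := by
  obtain ⟨⟨hm, hc, hcnt⟩, hlast⟩ := hT
  have d1 : ∀ c, (T 0 c).val < n := row0_lt' T (hm 0) hc hlast
  have hsuf := row1_suffix T (hm 1) ⟨n + 1, by omega⟩
    (fun c => by rw [Fin.le_def]; exact Nat.lt_succ_iff.mp (T 1 c).isLt)
    (fun c h => by have := d1 c; rw [h, val_mk'] at this; omega)
    y ((hcnt ⟨n + 1, by omega⟩).trans hfy)
  obtain ⟨hyle, hsuf⟩ := hsuf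
  funext r c
  rcases fin2cases r with rfl | rfl
  · simp only [Matrix.cons_val_zero]
    have := d1 c
    simp only [Fin.ext_iff, Fin.coe_castSucc, mrg_val]
    omega
  · simp only [Matrix.cons_val_one, Matrix.head_cons, Matrix.cons_val_zero]
    by_cases hcb : c.val + y < t + 1
    · simp only [if_pos hcb]
      have h2 : ¬ (T 1 c = ⟨n + 1, by omega⟩) := by
        rw [hsuf c]; omega
      simp only [Fin.ext_iff, val_mk'] at h2
      have := Nat.lt_succ_iff.mp (T 1 c).isLt
      simp only [Fin.ext_iff, Fin.coe_castSucc, mrg_val]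
      omega
    · simp only [if_neg hcb]
      have h2 : T 1 c = ⟨n + 1, by omega⟩ := (hsuf c).mpr (by omega)
      simp only [Fin.ext_iff, val_mk'] at h2
      simp only [Fin.ext_iff, Fin.val_last]
      omega


private lemma invA_right (hfg : ∀ k, k < n → f k = g k) (hfx : f n = x) (hfy : f (n + 1) = y)
    (hg : g n = x + y)
    (T : Fin 2 → Fin (t + 1) → Fin (n + 1))
    (hT : (∀ r, Monotone (T r)) ∧ (∀ c, T 0 c < T 1 c) ∧ ∀ i, cnt T i = g i.val) :
    (fun r c => mrg ((![fun c => (T 0 c).castSucc,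
      fun c => if c.val + y < t + 1 then (T 1 c).castSucc else Fin.last (n + 1)]) r c)) = T := by
  obtain ⟨hm, hc, hcnt⟩ := hT
  have e1 : ∀ c, (T 0 c).val < n := by
    intro c
    have h1 := (T 1 c).isLt
    have h2 := hc c
    rw [Fin.lt_def] at h2
    omega
  have hsuf := row1_suffix T (hm 1) ⟨n, by omega⟩
    (fun c => by rw [Fin.le_def]; exact Nat.lt_succ_iff.mp (T 1 c).isLt)
    (fun c h => by have := e1 c; rw [h, val_mk'] at this; omega)
    (x + y) ((hcnt ⟨n, by omega⟩).trans hg)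
  obtain ⟨hxyle, hsuf⟩ := hsuf
  funext r c
  rcases fin2cases r with rfl | rfl
  · show mrg ((T 0 c).castSucc) = T 0 c
    have := Nat.lt_succ_iff.mp (T 0 c).isLt
    simp only [Fin.ext_iff, mrg_val, Fin.coe_castSucc]
    omega
  · show mrg (if c.val + y < t + 1 then (T 1 c).castSucc else Fin.last (n + 1)) = T 1 c
    by_cases hcb : c.val + y < t + 1
    · simp only [if_pos hcb]
      have := Nat.lt_succ_iff.mp (T 1 c).isLt
      simp only [Fin.ext_iff, mrg_val, Fin.coe_castSucc]
      omega
    · simp only [if_neg hcb]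
      have h2 : T 1 c = ⟨n, by omega⟩ := (hsuf c).mpr (by omega)
      simp only [Fin.ext_iff, val_mk'] at h2
      simp only [Fin.ext_iff, mrg_val, Fin.val_last]
      omega


private lemma cardA (hfg : ∀ k, k < n → f k = g k) (hfx : f n = x) (hfy : f (n + 1) = y)
    (hg : g n = x + y) :
    Nat.card {T : Fin 2 → Fin (t + 1) → Fin (n + 2) //
      ((∀ r, Monotone (T r)) ∧ (∀ c, T 0 c < T 1 c) ∧ ∀ i, cnt T i = f i.val) ∧
      ¬ ((T 0 (Fin.last t)).val = n)} =
    Nat.card {T : Fin 2 → Fin (t + 1) → Fin (n + 1) //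
      (∀ r, Monotone (T r)) ∧ (∀ c, T 0 c < T 1 c) ∧ ∀ i, cnt T i = g i.val} := by
  apply Nat.card_congr
  exact { toFun := fun T => ⟨fun r c => mrg (T.1 r c), memA_fwd hfg hfx hfy hg T.1 T.2⟩,
          invFun := fun T => ⟨![fun c => (T.1 0 c).castSucc,
              fun c => if c.val + y < t + 1 then (T.1 1 c).castSucc else Fin.last (n + 1)],
              memA_bwd hfg hfx hfy hg T.1 T.2⟩,
          left_inv := fun T => Subtype.ext (invA_left hfg hfx hfy hg T.1 T.2),
          right_inv := fun T => Subtype.ext (invA_right hfg hfx hfy hg T.1 T.2) }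

end CardA

private lemma monotone_snoc {t m : ℕ} (f : Fin t → Fin m) (b : Fin m)
    (hf : Monotone f) (hb : ∀ c, f c ≤ b) : Monotone (Fin.snoc f b) := by
  intro c c' hcc'
  rcases c'.eq_castSucc_or_eq_last with ⟨j', rfl⟩ | rfl
  · rcases c.eq_castSucc_or_eq_last with ⟨j, rfl⟩ | rfl
    · simp only [Fin.snoc_castSucc]
      exact hf (by rwa [Fin.castSucc_le_castSucc_iff] at hcc')
    · exact absurd (lt_of_le_of_lt hcc' (Fin.castSucc_lt_last j')) (lt_irrefl _)
  · rcases c.eq_castSucc_or_eq_last with ⟨j, rfl⟩ | rfl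
    · simp only [Fin.snoc_castSucc, Fin.snoc_last]
      exact hb j
    · simp only [Fin.snoc_last]
      exact le_refl b

private lemma cnt_snoc_split {t m : ℕ} (T : Fin 2 → Fin (t + 1) → Fin m) (i : Fin m) :
    cnt T i = cnt (fun r c => T r c.castSucc) i
      + ((if T 0 (Fin.last t) = i then 1 else 0) + (if T 1 (Fin.last t) = i then 1 else 0)) := by
  unfold cnt
  rw [Fin.sum_univ_castSucc (f := fun c => if T 0 c = i then 1 else 0),
    Fin.sum_univ_castSucc (f := fun c => if T 1 c = i then 1 else 0)]
  simp only []
  omega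

section CardB
variable {n t x y : ℕ} {f f' : ℕ → ℕ}

private lemma memB_fwd (hff' : ∀ k, k < n → f k = f' k)
    (hfx : f n = x) (hfy : f (n + 1) = y) (hf'x : f' n = x - 1) (hf'y : f' (n + 1) = y - 1)
    (hx : 0 < x) (hy : 0 < y)
    (T : Fin 2 → Fin (t + 1) → Fin (n + 2))
    (hT : ((∀ r, Monotone (T r)) ∧ (∀ c, T 0 c < T 1 c) ∧ ∀ i, cnt T i = f i.val) ∧
      ((T 0 (Fin.last t)).val = n)) :
    (∀ r, Monotone ((fun r (c : Fin t) => T r c.castSucc) r)) ∧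
    (∀ c : Fin t, (fun r (c : Fin t) => T r c.castSucc) 0 c
        < (fun r (c : Fin t) => T r c.castSucc) 1 c) ∧
    (∀ i, cnt (fun r (c : Fin t) => T r c.castSucc) i = f' i.val) := by
  obtain ⟨⟨hm, hc, hcnt⟩, hlast⟩ := hT
  have b1 : (T 1 (Fin.last t)).val = n + 1 := by
    have h1 := hc (Fin.last t)
    have h2 := (T 1 (Fin.last t)).isLt
    rw [Fin.lt_def] at h1
    omega
  refine ⟨fun r => fun c c' hcc' => hm r (by rwa [Fin.castSucc_le_castSucc_iff]),
    fun c => hc c.castSucc, fun i => ?_⟩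
  have hiv := i.isLt
  have hsp := cnt_snoc_split T i
  rw [hcnt] at hsp
  rcases Nat.lt_or_ge i.val n with hi | hi
  · rw [if_neg (fun h => by rw [← h, hlast] at hi; omega) ,
      if_neg (fun h => by rw [← h] at hi; omega)] at hsp
    rw [← hff' i.val hi]
    omega
  · rcases Nat.lt_or_ge i.val (n + 1) with hi2 | hi2
    · have hi' : i.val = n := by omega
      rw [if_pos (by rw [Fin.ext_iff, hlast, hi']),
        if_neg (fun h => by rw [← h] at hi'; omega)] at hsp
      rw [hi', hf'x]
      rw [hi', hfx] at hsp
      omega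
    · have hi' : i.val = n + 1 := by omega
      rw [if_neg (fun h => by rw [← h, hlast] at hi'; omega),
        if_pos (by rw [Fin.ext_iff, b1, hi'])] at hsp
      rw [hi', hf'y]
      rw [hi', hfy] at hsp
      omega

private lemma memB_bwd (hff' : ∀ k, k < n → f k = f' k)
    (hfx : f n = x) (hfy : f (n + 1) = y) (hf'x : f' n = x - 1) (hf'y : f' (n + 1) = y - 1)
    (hx : 0 < x) (hy : 0 < y)
    (T : Fin 2 → Fin t → Fin (n + 2))
    (hT : (∀ r, Monotone (T r)) ∧ (∀ c, T 0 c < T 1 c) ∧ ∀ i, cnt T i = f' i.val) :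
    ((∀ r, Monotone ((![(Fin.snoc (T 0) ⟨n, by omega⟩ : Fin (t+1) → Fin (n+2)), (Fin.snoc (T 1) ⟨n + 1, by omega⟩ : Fin (t+1) → Fin (n+2))]) r)) ∧
     (∀ c, (![(Fin.snoc (T 0) ⟨n, by omega⟩ : Fin (t+1) → Fin (n+2)), (Fin.snoc (T 1) ⟨n + 1, by omega⟩ : Fin (t+1) → Fin (n+2))]) 0 c
        < (![(Fin.snoc (T 0) ⟨n, by omega⟩ : Fin (t+1) → Fin (n+2)), (Fin.snoc (T 1) ⟨n + 1, by omega⟩ : Fin (t+1) → Fin (n+2))]) 1 c) ∧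
     (∀ i, cnt (![(Fin.snoc (T 0) ⟨n, by omega⟩ : Fin (t+1) → Fin (n+2)), (Fin.snoc (T 1) ⟨n + 1, by omega⟩ : Fin (t+1) → Fin (n+2))]) i
        = f i.val)) ∧
    (((![(Fin.snoc (T 0) ⟨n, by omega⟩ : Fin (t+1) → Fin (n+2)), (Fin.snoc (T 1) ⟨n + 1, by omega⟩ : Fin (t+1) → Fin (n+2))]) 0
        (Fin.last t)).val = n) := by
  obtain ⟨hm, hc, hcnt⟩ := hT
  have c1 : ∀ c, (T 0 c).val ≤ n := by
    intro c
    have h1 := (T 1 c).isLt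
    have h2 := hc c
    rw [Fin.lt_def] at h2
    omega
  refine ⟨⟨fun r => ?_, fun c => ?_, fun i => ?_⟩, by simp [Fin.snoc_last]⟩
  · rcases fin2cases r with rfl | rfl
    · simp only [Matrix.cons_val_zero]
      exact monotone_snoc _ _ (hm 0) (fun c => by rw [Fin.le_def, val_mk']; exact c1 c)
    · simp only [Matrix.cons_val_one, Matrix.head_cons]
      exact monotone_snoc _ _ (hm 1)
        (fun c => by rw [Fin.le_def, val_mk']; exact Nat.lt_succ_iff.mp (T 1 c).isLt)
  · simp only [Matrix.cons_val_zero, Matrix.cons_val_one, Matrix.head_cons]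
    rcases c.eq_castSucc_or_eq_last with ⟨j, rfl⟩ | rfl
    · simp only [Fin.snoc_castSucc]
      exact hc j
    · simp only [Fin.snoc_last]
      rw [Fin.lt_def, val_mk', val_mk']
      omega
  · have hiv := i.isLt
    have hsp := cnt_snoc_split
      (![(Fin.snoc (T 0) ⟨n, by omega⟩ : Fin (t+1) → Fin (n+2)), (Fin.snoc (T 1) ⟨n + 1, by omega⟩ : Fin (t+1) → Fin (n+2))]) i
    simp only [Matrix.cons_val_zero, Matrix.cons_val_one, Matrix.head_cons,
      Fin.snoc_last] at hsp
    have hrest : cnt (fun r (c : Fin t) =>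
        (![(Fin.snoc (T 0) ⟨n, by omega⟩ : Fin (t+1) → Fin (n+2)), (Fin.snoc (T 1) ⟨n + 1, by omega⟩ : Fin (t+1) → Fin (n+2))]) r c.castSucc) i
        = cnt T i := by
      refine cnt_congr _ _ _ _ (fun r c => ?_)
      rcases fin2cases r with rfl | rfl <;>
        simp only [Matrix.cons_val_zero, Matrix.cons_val_one, Matrix.head_cons,
          Fin.snoc_castSucc]
    rw [hrest, hcnt] at hsp
    rcases Nat.lt_or_ge i.val n with hi | hi
    · rw [if_neg (fun h => by rw [Fin.ext_iff, val_mk'] at h; omega),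
        if_neg (fun h => by rw [Fin.ext_iff, val_mk'] at h; omega)] at hsp
      rw [hff' i.val hi]
      omega
    · rcases Nat.lt_or_ge i.val (n + 1) with hi2 | hi2
      · have hi' : i.val = n := by omega
        rw [if_pos (by rw [Fin.ext_iff, val_mk', hi']),
          if_neg (fun h => by rw [Fin.ext_iff, val_mk'] at h; omega)] at hsp
        rw [hi', hfx]
        rw [hi', hf'x] at hsp
        omega
      · have hi' : i.val = n + 1 := by omega
        rw [if_neg (fun h => by rw [Fin.ext_iff, val_mk'] at h; omega),
          if_pos (by rw [Fin.ext_iff, val_mk', hi'])] at hsp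
        rw [hi', hfy]
        rw [hi', hf'y] at hsp
        omega

private lemma invB_left
    (T : Fin 2 → Fin (t + 1) → Fin (n + 2))
    (hT : ((∀ r, Monotone (T r)) ∧ (∀ c, T 0 c < T 1 c) ∧ ∀ i, cnt T i = f i.val) ∧
      ((T 0 (Fin.last t)).val = n)) :
    (![(Fin.snoc (fun c : Fin t => T 0 c.castSucc) ⟨n, by omega⟩ : Fin (t+1) → Fin (n+2)),
       (Fin.snoc (fun c : Fin t => T 1 c.castSucc) ⟨n + 1, by omega⟩ : Fin (t+1) → Fin (n+2))]) = T := by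
  obtain ⟨⟨hm, hc, hcnt⟩, hlast⟩ := hT
  have b1 : (T 1 (Fin.last t)).val = n + 1 := by
    have h1 := hc (Fin.last t)
    have h2 := (T 1 (Fin.last t)).isLt
    rw [Fin.lt_def] at h1
    omega
  funext r c
  rcases fin2cases r with rfl | rfl
  · simp only [Matrix.cons_val_zero]
    rcases c.eq_castSucc_or_eq_last with ⟨j, rfl⟩ | rfl
    · simp only [Fin.snoc_castSucc]
    · simp only [Fin.snoc_last]
      rw [Fin.ext_iff, val_mk', hlast]
  · simp only [Matrix.cons_val_one, Matrix.head_cons, Matrix.cons_val_zero]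
    rcases c.eq_castSucc_or_eq_last with ⟨j, rfl⟩ | rfl
    · simp only [Fin.snoc_castSucc]
    · simp only [Fin.snoc_last]
      rw [Fin.ext_iff, val_mk', b1]

private lemma invB_right
    (T : Fin 2 → Fin t → Fin (n + 2)) :
    (fun r (c : Fin t) =>
      (![(Fin.snoc (T 0) ⟨n, by omega⟩ : Fin (t+1) → Fin (n+2)), (Fin.snoc (T 1) ⟨n + 1, by omega⟩ : Fin (t+1) → Fin (n+2))]) r c.castSucc) = T := by
  funext r c
  rcases fin2cases r with rfl | rfl
  · simp only [Matrix.cons_val_zero, Fin.snoc_castSucc]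
  · simp only [Matrix.cons_val_one, Matrix.head_cons, Matrix.cons_val_zero, Fin.snoc_castSucc]

private lemma cardB (hff' : ∀ k, k < n → f k = f' k)
    (hfx : f n = x) (hfy : f (n + 1) = y) (hf'x : f' n = x - 1) (hf'y : f' (n + 1) = y - 1)
    (hx : 0 < x) (hy : 0 < y) :
    Nat.card {T : Fin 2 → Fin (t + 1) → Fin (n + 2) //
      ((∀ r, Monotone (T r)) ∧ (∀ c, T 0 c < T 1 c) ∧ ∀ i, cnt T i = f i.val) ∧
      ((T 0 (Fin.last t)).val = n)} =
    Nat.card {T : Fin 2 → Fin t → Fin (n + 2) //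
      (∀ r, Monotone (T r)) ∧ (∀ c, T 0 c < T 1 c) ∧ ∀ i, cnt T i = f' i.val} := by
  apply Nat.card_congr
  exact { toFun := fun T => ⟨fun r (c : Fin t) => T.1 r c.castSucc,
            memB_fwd hff' hfx hfy hf'x hf'y hx hy T.1 T.2⟩,
          invFun := fun T => ⟨![(Fin.snoc (T.1 0) ⟨n, by omega⟩ : Fin (t+1) → Fin (n+2)),
              (Fin.snoc (T.1 1) ⟨n + 1, by omega⟩ : Fin (t+1) → Fin (n+2))],
            memB_bwd hff' hfx hfy hf'x hf'y hx hy T.1 T.2⟩,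
          left_inv := fun T => Subtype.ext (invB_left T.1 T.2),
          right_inv := fun T => Subtype.ext (invB_right T.1) }

end CardB

private lemma kostka_eq (L : List ℕ) (s : ℕ) (hs : L.sum = 2 * s) (f : ℕ → ℕ)
    (hf : ∀ (k : ℕ) (h : k < L.length), f k = L.get ⟨k, h⟩) :
    kostka L = Nat.card {T : Fin 2 → Fin s → Fin L.length //
      (∀ r, Monotone (T r)) ∧ (∀ c, T 0 c < T 1 c) ∧
      ∀ i : Fin L.length, cnt T i = f i.val} := by
  have hs2 : L.sum / 2 = s := by omega
  unfold kostka
  rw [if_pos (by omega), hs2]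
  apply Nat.card_congr (Equiv.subtypeEquivRight ?_)
  intro T
  refine and_congr_right (fun _ => and_congr_right (fun _ => forall_congr' (fun i => ?_)))
  rw [card_cnt, hf i.val i.isLt]

private lemma getD_get (L : List ℕ) (k : ℕ) (h : k < L.length) : L.getD k 0 = L.get ⟨k, h⟩ := by
  rw [List.getD_eq_getElem _ _ h, List.get_eq_getElem]

/-- **Schubert's recursion for Kostka numbers.**
If `a₁,…,aₘ` (here `a ++ [x, y]`, so `m ≥ 2`) are positive integers with even sum, then
`K(a₁,…,aₘ) = K(a₁,…,aₘ₋₂, aₘ₋₁ + aₘ) + K(a₁,…,aₘ₋₂, aₘ₋₁ − 1, aₘ − 1)`. -/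
theorem schubert_recursion (a : List ℕ) (x y : ℕ)
    (ha : ∀ b ∈ a, 0 < b) (hx : 0 < x) (hy : 0 < y)
    (heven : (a ++ [x, y]).sum % 2 = 0) :
    kostka (a ++ [x, y]) = kostka (a ++ [x + y]) + kostka (a ++ [x - 1, y - 1]) := by
  classical
  have hsum : (a ++ [x, y]).sum = a.sum + (x + y) := by simp
  obtain ⟨t, hs1⟩ : ∃ t, (a ++ [x, y]).sum = 2 * (t + 1) := by
    refine ⟨(a ++ [x, y]).sum / 2 - 1, ?_⟩
    omega
  have hs2 : (a ++ [x + y]).sum = 2 * (t + 1) := by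
    simp only [List.sum_append, List.sum_cons, List.sum_nil] at hs1 ⊢
    omega
  have hs3 : (a ++ [x - 1, y - 1]).sum = 2 * t := by
    simp only [List.sum_append, List.sum_cons, List.sum_nil] at hs1 ⊢
    omega
  have hl1 : (a ++ [x, y]).length = a.length + 2 := by simp
  have hl2 : (a ++ [x + y]).length = a.length + 1 := by simp
  have hl3 : (a ++ [x - 1, y - 1]).length = a.length + 2 := by simp
  have e1 := kostka_eq (a ++ [x, y]) (t + 1) hs1
    (fun k => (a ++ [x, y]).getD k 0) (fun k h => getD_get _ k h)
  have e2 := kostka_eq (a ++ [x + y]) (t + 1) hs2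
    (fun k => (a ++ [x + y]).getD k 0) (fun k h => getD_get _ k h)
  have e3 := kostka_eq (a ++ [x - 1, y - 1]) t hs3
    (fun k => (a ++ [x - 1, y - 1]).getD k 0) (fun k h => getD_get _ k h)
  rw [hl1] at e1
  rw [hl2] at e2
  rw [hl3] at e3
  rw [e1, e2, e3]
  rw [card_split _ (fun T => (T 0 (Fin.last t)).val = a.length)]
  -- value facts
  have v1x : (a ++ [x, y]).getD a.length 0 = x := by
    have h : a.length < (a ++ [x, y]).length := by simp
    rw [List.getD_eq_getElem _ _ h, List.getElem_append_right (le_refl _)]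
    simp
  have v1y : (a ++ [x, y]).getD (a.length + 1) 0 = y := by
    have h : a.length + 1 < (a ++ [x, y]).length := by simp
    rw [List.getD_eq_getElem _ _ h, List.getElem_append_right (Nat.le_succ a.length)]
    simp
  have v2 : (a ++ [x + y]).getD a.length 0 = x + y := by
    have h : a.length < (a ++ [x + y]).length := by simp
    rw [List.getD_eq_getElem _ _ h, List.getElem_append_right (le_refl _)]
    simp
  have v3x : (a ++ [x - 1, y - 1]).getD a.length 0 = x - 1 := by
    have h : a.length < (a ++ [x - 1, y - 1]).length := by simp
    rw [List.getD_eq_getElem _ _ h, List.getElem_append_right (le_refl _)]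
    simp
  have v3y : (a ++ [x - 1, y - 1]).getD (a.length + 1) 0 = y - 1 := by
    have h : a.length + 1 < (a ++ [x - 1, y - 1]).length := by simp
    rw [List.getD_eq_getElem _ _ h, List.getElem_append_right (Nat.le_succ a.length)]
    simp
  have v12 : ∀ k, k < a.length →
      (a ++ [x, y]).getD k 0 = (a ++ [x + y]).getD k 0 := by
    intro k hk
    rw [List.getD_append _ _ _ _ hk, List.getD_append _ _ _ _ hk]
  have v13 : ∀ k, k < a.length →
      (a ++ [x, y]).getD k 0 = (a ++ [x - 1, y - 1]).getD k 0 := by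
    intro k hk
    rw [List.getD_append _ _ _ _ hk, List.getD_append _ _ _ _ hk]
  rw [cardB v13 v1x v1y v3x v3y hx hy, cardA v12 v1x v1y v2]
  exact Nat.add_comm _ _
end

section
/- Let a_• = (a_1, …, a_m) be a valid Schubert problem with even sum 2s, and suppose a_1 + a_2 ≥ n(a_•) = s + 1. Then K(a_1, a_2, a_3, …, a_m) = K(a_1 − 1, a_2 − 1, a_3, …, a_m). -/
namespace KRed

lemma fin2 (r : Fin 2) : r = 0 ∨ r = 1 := by omega

lemma count_split {m t : ℕ} (T : Fin 2 → Fin (t+1) → Fin m) (i : Fin m) :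
    Nat.card {p : Fin 2 × Fin (t+1) // T p.1 p.2 = i} =
      ((if T 0 0 = i then 1 else 0) + (if T 1 0 = i then 1 else 0)) +
        Nat.card {p : Fin 2 × Fin t // T p.1 p.2.succ = i} := by
  classical
  simp only [Nat.card_eq_fintype_card, Fintype.card_subtype, Finset.card_filter,
    Fintype.sum_prod_type, Fin.sum_univ_succ, Fin.sum_univ_two, Fin.succ_zero_eq_one]
  ring

open Finset in
lemma key_pos {m t : ℕ} {T : Fin 2 → Fin (t+1) → Fin m}
    (hmono : ∀ r, Monotone (T r)) (hcol : ∀ c, T 0 c < T 1 c)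
    {i0 i1 : Fin m} (h00 : (i0 : ℕ) = 0) (h11 : (i1 : ℕ) = 1)
    {a b : ℕ}
    (hca : Nat.card {p : Fin 2 × Fin (t+1) // T p.1 p.2 = i0} = a)
    (hcb : Nat.card {p : Fin 2 × Fin (t+1) // T p.1 p.2 = i1} = b)
    (ha : 1 ≤ a) (hab : t + 2 ≤ a + b) :
    T 0 0 = i0 ∧ T 1 0 = i1 := by
  classical
  have hA : T 0 0 = i0 := by
    have hpos : 0 < Nat.card {p : Fin 2 × Fin (t+1) // T p.1 p.2 = i0} := by omega
    have hne : Nonempty {p : Fin 2 × Fin (t+1) // T p.1 p.2 = i0} :=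
      (Nat.card_pos_iff.mp hpos).1
    obtain ⟨⟨⟨r, c⟩, hp⟩⟩ := hne
    simp only at hp
    have hr : r = 0 := by
      rcases fin2 r with h | h
      · exact h
      · exfalso
        have h2 := hcol c
        rw [h] at hp
        rw [hp] at h2
        have : (T 0 c : ℕ) < (i0 : ℕ) := h2
        omega
    rw [hr] at hp
    have h1 : T 0 0 ≤ T 0 c := hmono 0 (Fin.zero_le c)
    rw [hp] at h1
    have h2 : (T 0 0 : ℕ) ≤ (i0 : ℕ) := h1
    exact Fin.ext (by omega)
  refine ⟨hA, ?_⟩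
  have hge : (1 : ℕ) ≤ (T 1 0 : ℕ) := by
    have h3 := hcol 0
    rw [hA] at h3
    have : (i0 : ℕ) < (T 1 0 : ℕ) := h3
    omega
  by_contra hB
  have h2 : 2 ≤ (T 1 0 : ℕ) := by
    rcases Nat.lt_or_ge (T 1 0 : ℕ) 2 with h | h
    · exact absurd (Fin.ext (by omega : ((T 1 0 : Fin m) : ℕ) = (i1 : ℕ))) hB
    · exact h
  have hrow : ∀ c, 2 ≤ (T 1 c : ℕ) := fun c => le_trans h2 (hmono 1 (Fin.zero_le c))
  set F0 : Finset (Fin 2 × Fin (t+1)) := univ.filter (fun p => T p.1 p.2 = i0) with hF0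
  set F1 : Finset (Fin 2 × Fin (t+1)) := univ.filter (fun p => T p.1 p.2 = i1) with hF1
  have hcard0 : F0.card = a := by
    rw [hF0, ← Fintype.card_subtype, ← Nat.card_eq_fintype_card]; exact hca
  have hcard1 : F1.card = b := by
    rw [hF1, ← Fintype.card_subtype, ← Nat.card_eq_fintype_card]; exact hcb
  have hdisj : Disjoint F0 F1 := by
    rw [Finset.disjoint_left]
    intro p hp0 hp1
    rw [hF0, Finset.mem_filter] at hp0
    rw [hF1, Finset.mem_filter] at hp1
    have : (i0 : ℕ) = (i1 : ℕ) := by rw [← hp0.2, hp1.2]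
    omega
  have hrowfst : ∀ p ∈ F0 ∪ F1, p.1 = 0 := by
    intro p hp
    rcases fin2 p.1 with h | h
    · exact h
    · exfalso
      rw [Finset.mem_union, hF0, hF1, Finset.mem_filter, Finset.mem_filter] at hp
      have hv := hrow p.2
      rw [← h] at hv
      rcases hp with ⟨_, hp⟩ | ⟨_, hp⟩ <;> rw [hp] at hv <;> omega
  have hinj : Set.InjOn Prod.snd ((F0 ∪ F1 : Finset (Fin 2 × Fin (t+1))) :
      Set (Fin 2 × Fin (t+1))) := by
    intro p hp q hq hpq
    have := hrowfst p hp
    have := hrowfst q hq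
    exact Prod.ext (by simp_all) hpq
  have hle : (F0 ∪ F1).card ≤ (univ : Finset (Fin (t+1))).card :=
    Finset.card_le_card_of_injOn Prod.snd (fun p _ => Finset.mem_univ _) hinj
  rw [Finset.card_union_of_disjoint hdisj, hcard0, hcard1, Finset.card_univ,
    Fintype.card_fin] at hle
  omega

def ext {m t : ℕ} (hm : 2 ≤ m) (T : Fin 2 → Fin t → Fin m) : Fin 2 → Fin (t+1) → Fin m :=
  fun r c => Fin.cases ⟨r.val, lt_of_lt_of_le r.isLt hm⟩ (fun c' => T r c') c

@[simp] lemma ext_zero {m t : ℕ} (hm : 2 ≤ m) (T : Fin 2 → Fin t → Fin m) (r : Fin 2) :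
    ext hm T r 0 = ⟨r.val, lt_of_lt_of_le r.isLt hm⟩ := by simp [ext]

@[simp] lemma ext_succ {m t : ℕ} (hm : 2 ≤ m) (T : Fin 2 → Fin t → Fin m) (r : Fin 2)
    (c : Fin t) : ext hm T r c.succ = T r c := by simp [ext]

lemma core (a b t : ℕ) (rest : List ℕ) (ha : 1 ≤ a) (hb : 1 ≤ b) (hab : t + 2 ≤ a + b) :
    Nat.card {T : Fin 2 → Fin (t + 1) → Fin (a :: b :: rest).length //
      (∀ r, Monotone (T r)) ∧ (∀ c, T 0 c < T 1 c) ∧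
      (∀ i : Fin (a :: b :: rest).length,
        Nat.card {p : Fin 2 × Fin (t + 1) // T p.1 p.2 = i} = (a :: b :: rest).get i)} =
    Nat.card {T : Fin 2 → Fin t → Fin ((a - 1) :: (b - 1) :: rest).length //
      (∀ r, Monotone (T r)) ∧ (∀ c, T 0 c < T 1 c) ∧
      (∀ i : Fin ((a - 1) :: (b - 1) :: rest).length,
        Nat.card {p : Fin 2 × Fin t // T p.1 p.2 = i} = ((a - 1) :: (b - 1) :: rest).get i)} := by
  classical
  have hm : 2 ≤ (a :: b :: rest).length := by simp [List.length_cons]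
  have h0lt : 0 < (a :: b :: rest).length := by omega
  have h1lt : 1 < (a :: b :: rest).length := by omega
  -- key positions
  have key : ∀ (T : Fin 2 → Fin (t+1) → Fin (a :: b :: rest).length),
      (∀ r, Monotone (T r)) → (∀ c, T 0 c < T 1 c) →
      (∀ i : Fin (a :: b :: rest).length,
        Nat.card {p : Fin 2 × Fin (t + 1) // T p.1 p.2 = i} = (a :: b :: rest).get i) →
      T 0 0 = ⟨0, h0lt⟩ ∧ T 1 0 = ⟨1, h1lt⟩ := by
    intro T hmono hcol hcnt
    exact key_pos hmono hcol rfl rfl (hcnt ⟨0, h0lt⟩) (hcnt ⟨1, h1lt⟩) ha hab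
  -- forward property
  have fwd_prop : ∀ (x : {T : Fin 2 → Fin (t + 1) → Fin (a :: b :: rest).length //
      (∀ r, Monotone (T r)) ∧ (∀ c, T 0 c < T 1 c) ∧
      (∀ i : Fin (a :: b :: rest).length,
        Nat.card {p : Fin 2 × Fin (t + 1) // T p.1 p.2 = i} = (a :: b :: rest).get i)}),
      (∀ r, Monotone (fun c : Fin t => x.1 r c.succ)) ∧
      (∀ c : Fin t, x.1 0 c.succ < x.1 1 c.succ) ∧
      (∀ i : Fin ((a - 1) :: (b - 1) :: rest).length,
        Nat.card {p : Fin 2 × Fin t // x.1 p.1 p.2.succ = i} =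
          ((a - 1) :: (b - 1) :: rest).get i) := by
    rintro ⟨T, hmono, hcol, hcnt⟩
    obtain ⟨hT0, hT1⟩ := key T hmono hcol hcnt
    refine ⟨fun r u v huv => hmono r (Fin.succ_le_succ_iff.mpr huv), fun c => hcol c.succ, ?_⟩
    intro i
    have hc := hcnt i
    rw [count_split] at hc
    have hv0 : (T 0 0 : ℕ) = 0 := by rw [hT0]
    have hv1 : (T 1 0 : ℕ) = 1 := by rw [hT1]
    rcases i with ⟨iv, hi⟩
    rcases iv with _ | _ | n
    · simp only [Fin.ext_iff, hv0, hv1] at hc ⊢; simp at hc ⊢; omega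
    · simp [Fin.ext_iff, hv0, hv1] at hc ⊢; omega
    · simp [Fin.ext_iff, hv0, hv1] at hc ⊢; omega
  -- backward property
  have bwd_prop : ∀ (y : {T : Fin 2 → Fin t → Fin ((a - 1) :: (b - 1) :: rest).length //
      (∀ r, Monotone (T r)) ∧ (∀ c, T 0 c < T 1 c) ∧
      (∀ i : Fin ((a - 1) :: (b - 1) :: rest).length,
        Nat.card {p : Fin 2 × Fin t // T p.1 p.2 = i} = ((a - 1) :: (b - 1) :: rest).get i)}),
      (∀ r, Monotone (ext hm y.1 r)) ∧
      (∀ c, ext hm y.1 0 c < ext hm y.1 1 c) ∧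
      (∀ i : Fin (a :: b :: rest).length,
        Nat.card {p : Fin 2 × Fin (t + 1) // ext hm y.1 p.1 p.2 = i} = (a :: b :: rest).get i) := by
    rintro ⟨T, hmono, hcol, hcnt⟩
    refine ⟨?_, ?_, ?_⟩
    · intro r u v huv
      rcases Fin.eq_zero_or_eq_succ u with hu | ⟨u', rfl⟩
      · subst hu
        rcases Fin.eq_zero_or_eq_succ v with hv | ⟨v', rfl⟩
        · subst hv; exact le_refl _
        · rw [ext_zero, ext_succ]
          rcases fin2 r with hr | hr <;> subst hr
          · exact Fin.mk_le_of_le_val (Nat.zero_le _)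
          · have := hcol v'
            have hlt : (T 0 v' : ℕ) < (T 1 v' : ℕ) := this
            exact Fin.mk_le_of_le_val (by simpa using Nat.one_le_iff_ne_zero.mpr (by omega))
      · rcases Fin.eq_zero_or_eq_succ v with hv | ⟨v', rfl⟩
        · subst hv
          exact absurd (Fin.le_zero_iff.mp huv) (Fin.succ_ne_zero u')
        · rw [ext_succ, ext_succ]
          exact hmono r (Fin.succ_le_succ_iff.mp huv)
    · intro c
      rcases Fin.eq_zero_or_eq_succ c with hc | ⟨c', rfl⟩
      · subst hc
        rw [ext_zero, ext_zero]
        simp [Fin.lt_def]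
      · rw [ext_succ, ext_succ]
        exact hcol c'
    · intro i
      rw [count_split]
      simp only [ext_zero, ext_succ]
      have hc := hcnt i
      rcases i with ⟨iv, hi⟩
      rcases iv with _ | _ | n
      · simp only [Fin.ext_iff] at hc ⊢; simp at hc ⊢; omega
      · simp [Fin.ext_iff] at hc ⊢; omega
      · simp [Fin.ext_iff] at hc ⊢; omega
  apply Nat.card_congr
  refine
    { toFun := fun x => ⟨fun r c => x.1 r c.succ, fwd_prop x⟩,
      invFun := fun y => ⟨ext hm y.1, bwd_prop y⟩,
      left_inv := ?_, right_inv := ?_ }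
  · rintro ⟨T, hmono, hcol, hcnt⟩
    obtain ⟨hT0, hT1⟩ := key T hmono hcol hcnt
    apply Subtype.ext
    funext r c
    show ext hm (fun r c => T r c.succ) r c = T r c
    rcases Fin.eq_zero_or_eq_succ c with hc | ⟨c', rfl⟩
    · subst hc
      rw [ext_zero]
      rcases fin2 r with hr | hr <;> subst hr
      · rw [hT0]; exact Fin.ext (by simp)
      · rw [hT1]; exact Fin.ext (by simp)
    · rw [ext_succ]
  · rintro ⟨T, hmono, hcol, hcnt⟩
    apply Subtype.ext
    funext r c
    show ext hm T r c.succ = T r c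
    rw [ext_succ]

end KRed

/-- If `a₁, a₂, a₃, …, aₘ` is a valid Schubert problem with even sum `2s` and
`a₁ + a₂ ≥ n(a) = s + 1`, then `K(a₁, a₂, a₃, …, aₘ) = K(a₁ − 1, a₂ − 1, a₃, …, aₘ)`. -/
theorem kostka_reduction (a b s : ℕ) (rest : List ℕ)
    (hpos : ∀ x ∈ a :: b :: rest, 0 < x)
    (hsum : (a :: b :: rest).sum = 2 * s)
    (hvalid : ∀ x ∈ a :: b :: rest, x ≤ s)
    (hab : s + 1 ≤ a + b) :
    kostka (a :: b :: rest) = kostka ((a - 1) :: (b - 1) :: rest) := by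
  have ha : 1 ≤ a := hpos a (by simp)
  have hb : 1 ≤ b := hpos b (by simp)
  have has : a ≤ s := hvalid a (by simp)
  obtain ⟨t, rfl⟩ : ∃ t, s = t + 1 := ⟨s - 1, by omega⟩
  have h1 : (a :: b :: rest).sum = 2 * (t + 1) := hsum
  have h2 : ((a - 1) :: (b - 1) :: rest).sum = 2 * t := by
    simp only [List.sum_cons] at h1 ⊢
    omega
  rw [kostka, kostka, h1, h2]
  rw [if_pos (by omega), if_pos (by omega)]
  have e1 : 2 * (t + 1) / 2 = t + 1 := by omega
  have e2 : 2 * t / 2 = t := by omega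
  rw [e1, e2]
  exact KRed.core a b t rest ha hb (by omega)
end

section
/- If a_• = (a_1, a_2, a_3, a_4) is a valid Schubert problem, then K(a_•) = 1 + min{ a_i, n(a_•) − 1 − a_j : i, j = 1, …, 4 }, where n(a_•) = s + 1 and 2s = a_1 + a_2 + a_3 + a_4. -/
open Finset

/-! ### Auxiliary counting lemmas -/

lemma fin_interval_card (n l k : ℕ) :
    (Finset.univ.filter (fun c : Fin n => l ≤ c.val ∧ c.val < k)).card
      = min k n - min l n := by
  rw [show min k n - min l n = (Finset.Ico (min l n) (min k n)).card by rw [Nat.card_Ico]]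
  apply Finset.card_bij (fun c _ => c.val)
  · intro c hc; simp_all
  · intro c _ d _ h; exact Fin.ext h
  · intro b hb
    simp only [mem_Ico] at hb
    refine ⟨⟨b, by omega⟩, by simp; omega, rfl⟩

lemma fin_lt_card (n k : ℕ) :
    (Finset.univ.filter (fun c : Fin n => c.val < k)).card = min k n := by
  have h := fin_interval_card n 0 k
  simp only [Nat.zero_le, true_and, Nat.min_zero, Nat.zero_min, Nat.sub_zero] at h
  simpa using h

lemma mono_le_iff {n m : ℕ} (f : Fin n → Fin m) (hf : Monotone f) (v : ℕ) (c : Fin n) :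
    (f c : ℕ) ≤ v ↔ (c : ℕ) < (Finset.univ.filter (fun d : Fin n => (f d : ℕ) ≤ v)).card := by
  constructor
  · intro h
    have hsub : Finset.Iic c ⊆ Finset.univ.filter (fun d : Fin n => (f d : ℕ) ≤ v) := by
      intro d hd
      simp only [mem_Iic] at hd
      simp only [mem_filter, mem_univ, true_and]
      exact le_trans (hf hd) h
    have := Finset.card_le_card hsub
    rw [Fin.card_Iic] at this
    omega
  · intro h
    by_contra hc
    push_neg at hc
    have hsub : Finset.univ.filter (fun d : Fin n => (f d : ℕ) ≤ v) ⊆ Finset.Iio c := by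
      intro d hd
      simp only [mem_filter, mem_univ, true_and] at hd
      simp only [mem_Iio]
      by_contra hdc
      push_neg at hdc
      have h2 : (f c : ℕ) ≤ (f d : ℕ) := hf hdc
      omega
    have := Finset.card_le_card hsub
    rw [Fin.card_Iio] at this
    omega

/-! ### Counting entries of a row -/

def cntLe {s : ℕ} (f : Fin s → Fin 4) (v : ℕ) : ℕ :=
  (Finset.univ.filter fun c => (f c : ℕ) ≤ v).card

def cntEq {s : ℕ} (f : Fin s → Fin 4) (v : ℕ) : ℕ :=
  (Finset.univ.filter fun c => (f c : ℕ) = v).card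

lemma cntLe_zero {s : ℕ} (f : Fin s → Fin 4) : cntLe f 0 = cntEq f 0 := by
  unfold cntLe cntEq; congr 1; ext c; simp [Nat.le_zero]

lemma cntLe_succ {s : ℕ} (f : Fin s → Fin 4) (k : ℕ) :
    cntLe f (k + 1) = cntLe f k + cntEq f (k + 1) := by
  unfold cntLe cntEq
  rw [← Finset.card_union_of_disjoint]
  · congr 1; ext c; simp; omega
  · simp only [Finset.disjoint_left, mem_filter, mem_univ, true_and]
    intro c h1 h2; omega

lemma cntLe_ge_three {s : ℕ} (f : Fin s → Fin 4) (v : ℕ) (hv : 3 ≤ v) :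
    cntLe f v = s := by
  unfold cntLe
  rw [Finset.filter_true_of_mem, Finset.card_univ, Fintype.card_fin]
  intro c _
  have := (f c).isLt
  omega

lemma cntLe_mono {s : ℕ} (f : Fin s → Fin 4) {v w : ℕ} (h : v ≤ w) :
    cntLe f v ≤ cntLe f w := by
  apply Finset.card_le_card
  intro c hc
  simp only [mem_filter, mem_univ, true_and] at *
  omega

lemma cntLe_le {s : ℕ} (f : Fin s → Fin 4) (v : ℕ) : cntLe f v ≤ s := by
  have := cntLe_mono f (le_max_left v 3)
  rw [cntLe_ge_three f _ (le_max_right v 3)] at this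
  exact this

lemma mono_det {s : ℕ} (f g : Fin s → Fin 4) (hf : Monotone f) (hg : Monotone g)
    (h : ∀ v : ℕ, cntLe f v = cntLe g v) : f = g := by
  have h' : ∀ v : ℕ, (Finset.univ.filter fun c => (f c:ℕ) ≤ v).card
      = (Finset.univ.filter fun c => (g c:ℕ) ≤ v).card := h
  exact funext fun c => Fin.ext (le_antisymm
    ((mono_le_iff f hf _ c).mpr (by rw [h']; exact (mono_le_iff g hg _ c).mp le_rfl))
    ((mono_le_iff g hg _ c).mpr (by rw [← h']; exact (mono_le_iff f hf _ c).mp le_rfl)))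

lemma cntEq_coe {s : ℕ} (f : Fin s → Fin 4) (i : Fin 4) :
    (Finset.univ.filter fun c => f c = i).card = cntEq f (i : ℕ) := by
  unfold cntEq; congr 1; ext c; simp [Fin.ext_iff]

lemma prod_count {s m : ℕ} (T : Fin 2 → Fin s → Fin m) (i : Fin m) :
    Nat.card {p : Fin 2 × Fin s // T p.1 p.2 = i}
      = (Finset.univ.filter fun c => T 0 c = i).card
        + (Finset.univ.filter fun c => T 1 c = i).card := by
  rw [Nat.card_eq_fintype_card, Fintype.card_subtype]
  rw [Finset.card_filter, Finset.card_filter, Finset.card_filter]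
  rw [Fintype.sum_prod_type, Fin.sum_univ_two]

/-! ### The explicit family of tableaux -/

def Frow (a1 a2 a4 s t : ℕ) : Fin 2 → Fin s → Fin 4 := fun r c =>
  if (r : ℕ) = 0 then
    (if c.val < a1 then 0 else if c.val < a1 + a2 - t then 1 else 2)
  else
    (if c.val < t then 1 else if c.val < s - a4 then 2 else 3)

lemma Frow0_val (a1 a2 a4 s t : ℕ) (c : Fin s) :
    ((Frow a1 a2 a4 s t 0 c) : ℕ)
      = if c.val < a1 then 0 else if c.val < a1 + a2 - t then 1 else 2 := by
  unfold Frow; norm_num; split_ifs <;> rfl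

lemma Frow1_val (a1 a2 a4 s t : ℕ) (c : Fin s) :
    ((Frow a1 a2 a4 s t 1 c) : ℕ)
      = if c.val < t then 1 else if c.val < s - a4 then 2 else 3 := by
  unfold Frow; norm_num; split_ifs <;> rfl

lemma Frow_mono (a1 a2 a4 s t : ℕ) (r : Fin 2) : Monotone (Frow a1 a2 a4 s t r) := by
  intro c d hcd
  have h : (c : ℕ) ≤ (d : ℕ) := hcd
  rw [Fin.le_def]
  match r with
  | 0 => rw [Frow0_val, Frow0_val]; split_ifs <;> omega
  | 1 => rw [Frow1_val, Frow1_val]; split_ifs <;> omega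

lemma Frow_col (a1 a2 a3 a4 s t : ℕ) (hsum : a1 + a2 + a3 + a4 = 2 * s)
    (ht2 : t ≤ a1) (ht4 : t + a3 ≤ s)
    (c : Fin s) : Frow a1 a2 a4 s t 0 c < Frow a1 a2 a4 s t 1 c := by
  rw [Fin.lt_def, Frow0_val, Frow1_val]
  have := c.isLt
  split_ifs <;> omega

lemma Frow_cnt00 (a1 a2 a4 s t : ℕ) (h : a1 ≤ s) :
    cntLe (Frow a1 a2 a4 s t 0) 0 = a1 := by
  unfold cntLe
  rw [show (Finset.univ.filter fun c : Fin s => ((Frow a1 a2 a4 s t 0 c):ℕ) ≤ 0)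
      = Finset.univ.filter (fun c : Fin s => c.val < a1) from by
    ext c; simp only [mem_filter, mem_univ, true_and, Frow0_val]
    split_ifs <;> omega]
  rw [fin_lt_card]; omega

lemma Frow_cnt01 (a1 a2 a4 s t : ℕ) (h : a1 + a2 - t ≤ s) (h2 : t ≤ a2) :
    cntLe (Frow a1 a2 a4 s t 0) 1 = a1 + a2 - t := by
  unfold cntLe
  rw [show (Finset.univ.filter fun c : Fin s => ((Frow a1 a2 a4 s t 0 c):ℕ) ≤ 1)
      = Finset.univ.filter (fun c : Fin s => c.val < a1 + a2 - t) from by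
    ext c; simp only [mem_filter, mem_univ, true_and, Frow0_val]
    split_ifs <;> omega]
  rw [fin_lt_card]; omega

lemma Frow_cnt02 (a1 a2 a4 s t : ℕ) (v : ℕ) (hv : 2 ≤ v) :
    cntLe (Frow a1 a2 a4 s t 0) v = s := by
  unfold cntLe
  rw [Finset.filter_true_of_mem, Finset.card_univ, Fintype.card_fin]
  intro c _; rw [Frow0_val]; split_ifs <;> omega

lemma Frow_cnt10 (a1 a2 a4 s t : ℕ) :
    cntLe (Frow a1 a2 a4 s t 1) 0 = 0 := by
  unfold cntLe
  rw [Finset.card_eq_zero, Finset.filter_eq_empty_iff]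
  intro c _; rw [Frow1_val]; split_ifs <;> omega

lemma Frow_cnt11 (a1 a2 a4 s t : ℕ) (h : t + a4 ≤ s) :
    cntLe (Frow a1 a2 a4 s t 1) 1 = t := by
  unfold cntLe
  rw [show (Finset.univ.filter fun c : Fin s => ((Frow a1 a2 a4 s t 1 c):ℕ) ≤ 1)
      = Finset.univ.filter (fun c : Fin s => c.val < t) from by
    ext c; simp only [mem_filter, mem_univ, true_and, Frow1_val]
    split_ifs <;> omega]
  rw [fin_lt_card]; omega

lemma Frow_cnt12 (a1 a2 a4 s t : ℕ) (h : t + a4 ≤ s) :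
    cntLe (Frow a1 a2 a4 s t 1) 2 = s - a4 := by
  unfold cntLe
  rw [show (Finset.univ.filter fun c : Fin s => ((Frow a1 a2 a4 s t 1 c):ℕ) ≤ 2)
      = Finset.univ.filter (fun c : Fin s => c.val < s - a4) from by
    ext c; simp only [mem_filter, mem_univ, true_and, Frow1_val]
    split_ifs <;> omega]
  rw [fin_lt_card]; omega

/-- Membership of `Frow` tableaux: the content conditions. -/
lemma Frow_mem (a1 a2 a3 a4 s t : ℕ) (hsum : a1 + a2 + a3 + a4 = 2 * s)
    (hv1 : a1 ≤ s) (hv4 : a4 ≤ s)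
    (hL : a1 + a2 ≤ s + t) (ht1 : t ≤ a1) (ht2 : t ≤ a2) (ht3 : t + a3 ≤ s)
    (ht4 : t + a4 ≤ s) :
    ∀ i : Fin 4, Nat.card {p : Fin 2 × Fin s // Frow a1 a2 a4 s t p.1 p.2 = i}
      = [a1, a2, a3, a4].get i := by
  have e00 := Frow_cnt00 a1 a2 a4 s t hv1
  have e01 := Frow_cnt01 a1 a2 a4 s t (by omega) ht2
  have e02 := Frow_cnt02 a1 a2 a4 s t 2 le_rfl
  have e03 := Frow_cnt02 a1 a2 a4 s t 3 (by omega)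
  have e10 := Frow_cnt10 a1 a2 a4 s t
  have e11 := Frow_cnt11 a1 a2 a4 s t ht4
  have e12 := Frow_cnt12 a1 a2 a4 s t ht4
  have e13 := cntLe_ge_three (Frow a1 a2 a4 s t 1) 3 le_rfl
  have z0 := cntLe_zero (Frow a1 a2 a4 s t 0)
  have z1 := cntLe_zero (Frow a1 a2 a4 s t 1)
  have s01 : cntLe (Frow a1 a2 a4 s t 0) 1 = cntLe (Frow a1 a2 a4 s t 0) 0 + cntEq (Frow a1 a2 a4 s t 0) 1 := cntLe_succ _ 0
  have s02 : cntLe (Frow a1 a2 a4 s t 0) 2 = cntLe (Frow a1 a2 a4 s t 0) 1 + cntEq (Frow a1 a2 a4 s t 0) 2 := cntLe_succ _ 1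
  have s03 : cntLe (Frow a1 a2 a4 s t 0) 3 = cntLe (Frow a1 a2 a4 s t 0) 2 + cntEq (Frow a1 a2 a4 s t 0) 3 := cntLe_succ _ 2
  have s11 : cntLe (Frow a1 a2 a4 s t 1) 1 = cntLe (Frow a1 a2 a4 s t 1) 0 + cntEq (Frow a1 a2 a4 s t 1) 1 := cntLe_succ _ 0
  have s12 : cntLe (Frow a1 a2 a4 s t 1) 2 = cntLe (Frow a1 a2 a4 s t 1) 1 + cntEq (Frow a1 a2 a4 s t 1) 2 := cntLe_succ _ 1
  have s13 : cntLe (Frow a1 a2 a4 s t 1) 3 = cntLe (Frow a1 a2 a4 s t 1) 2 + cntEq (Frow a1 a2 a4 s t 1) 3 := cntLe_succ _ 2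
  intro i
  rw [prod_count, cntEq_coe, cntEq_coe]
  fin_cases i <;> simp [List.get] <;> omega

/-- Determination: any tableau with the given content equals `Frow` at its
parameter `t = cntLe (T 1) 1`, and `t` satisfies the required bounds. -/
lemma tableau_det (a1 a2 a3 a4 s : ℕ) (hsum : a1 + a2 + a3 + a4 = 2 * s)
    (hv1 : a1 ≤ s) (hv2 : a2 ≤ s) (hv3 : a3 ≤ s) (hv4 : a4 ≤ s)
    (T : Fin 2 → Fin s → Fin 4)
    (hm : ∀ r, Monotone (T r)) (hcol : ∀ c, T 0 c < T 1 c)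
    (hc : ∀ i : Fin 4, Nat.card {p : Fin 2 × Fin s // T p.1 p.2 = i}
      = [a1, a2, a3, a4].get i) :
    (a1 + a2 ≤ s + cntLe (T 1) 1 ∧ cntLe (T 1) 1 ≤ a1 ∧ cntLe (T 1) 1 ≤ a2 ∧
      cntLe (T 1) 1 + a3 ≤ s ∧ cntLe (T 1) 1 + a4 ≤ s) ∧
    T = Frow a1 a2 a4 s (cntLe (T 1) 1) := by
  set t := cntLe (T 1) 1 with hT
  -- content equations
  have hc0 := hc ⟨0, by norm_num⟩
  have hc1 := hc ⟨1, by norm_num⟩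
  have hc2 := hc ⟨2, by norm_num⟩
  have hc3 := hc ⟨3, by norm_num⟩
  rw [prod_count, cntEq_coe, cntEq_coe] at hc0 hc1 hc2 hc3
  simp [List.get] at hc0 hc1 hc2 hc3
  -- structural zero counts
  have hzero : cntEq (T 1) 0 = 0 := by
    unfold cntEq
    rw [Finset.card_eq_zero, Finset.filter_eq_empty_iff]
    intro c _
    have := hcol c
    rw [Fin.lt_def] at this
    omega
  have hthree : cntEq (T 0) 3 = 0 := by
    unfold cntEq
    rw [Finset.card_eq_zero, Finset.filter_eq_empty_iff]
    intro c _
    have h1 := hcol c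
    rw [Fin.lt_def] at h1
    have h2 := (T 1 c).isLt
    omega
  -- column strictness inequalities between the rows' counts
  have hsub1 : cntLe (T 1) 1 ≤ cntLe (T 0) 0 := by
    apply Finset.card_le_card
    intro c hcmem
    simp only [mem_filter, mem_univ, true_and] at *
    have := hcol c
    rw [Fin.lt_def] at this
    omega
  have hsub2 : cntLe (T 1) 2 ≤ cntLe (T 0) 1 := by
    apply Finset.card_le_card
    intro c hcmem
    simp only [mem_filter, mem_univ, true_and] at *
    have := hcol c
    rw [Fin.lt_def] at this
    omega
  -- count chain equations
  have z0 := cntLe_zero (T 0)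
  have z1 := cntLe_zero (T 1)
  have s01 : cntLe (T 0) 1 = cntLe (T 0) 0 + cntEq (T 0) 1 := cntLe_succ _ 0
  have s02 : cntLe (T 0) 2 = cntLe (T 0) 1 + cntEq (T 0) 2 := cntLe_succ _ 1
  have s03 : cntLe (T 0) 3 = cntLe (T 0) 2 + cntEq (T 0) 3 := cntLe_succ _ 2
  have s11 : cntLe (T 1) 1 = cntLe (T 1) 0 + cntEq (T 1) 1 := cntLe_succ _ 0
  have s12 : cntLe (T 1) 2 = cntLe (T 1) 1 + cntEq (T 1) 2 := cntLe_succ _ 1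
  have s13 : cntLe (T 1) 3 = cntLe (T 1) 2 + cntEq (T 1) 3 := cntLe_succ _ 2
  have e03 := cntLe_ge_three (T 0) 3 le_rfl
  have e13 := cntLe_ge_three (T 1) 3 le_rfl
  -- derived values
  have e00 : cntLe (T 0) 0 = a1 := by omega
  have e02 : cntLe (T 0) 2 = s := by omega
  have e01t : cntLe (T 0) 1 + t = a1 + a2 := by omega
  have e12 : cntLe (T 1) 2 = s - a4 := by omega
  have e10 : cntLe (T 1) 0 = 0 := by omega
  have hle01 : cntLe (T 0) 1 ≤ s := cntLe_le _ _
  have ht1 : t ≤ a1 := by omega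
  have ht2 : t ≤ a2 := by omega
  have ht4 : t + a4 ≤ s := by
    have := cntLe_mono (T 1) (show (1:ℕ) ≤ 2 by norm_num)
    omega
  have ht3 : t + a3 ≤ s := by omega
  have hL : a1 + a2 ≤ s + t := by omega
  refine ⟨⟨hL, ht1, ht2, ht3, ht4⟩, ?_⟩
  have h0 : T 0 = Frow a1 a2 a4 s t 0 := by
    apply mono_det _ _ (hm 0) (Frow_mono a1 a2 a4 s t 0)
    intro v
    match v with
    | 0 => rw [e00, Frow_cnt00 a1 a2 a4 s t hv1]
    | 1 => rw [Frow_cnt01 a1 a2 a4 s t (by omega) ht2]; omega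
    | (n+2) =>
        rw [Frow_cnt02 a1 a2 a4 s t (n+2) (by omega)]
        have h1 : cntLe (T 0) 2 ≤ cntLe (T 0) (n+2) := cntLe_mono _ (by omega)
        have h2 : cntLe (T 0) (n+2) ≤ s := cntLe_le _ _
        omega
  have h1 : T 1 = Frow a1 a2 a4 s t 1 := by
    apply mono_det _ _ (hm 1) (Frow_mono a1 a2 a4 s t 1)
    intro v
    match v with
    | 0 => rw [e10, Frow_cnt10 a1 a2 a4 s t]
    | 1 => rw [Frow_cnt11 a1 a2 a4 s t ht4]
    | 2 => rw [e12, Frow_cnt12 a1 a2 a4 s t ht4]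
    | (n+3) =>
        rw [cntLe_ge_three (Frow a1 a2 a4 s t 1) (n+3) (by omega),
          cntLe_ge_three (T 1) (n+3) (by omega)]
  funext r
  match r with
  | 0 => exact h0
  | 1 => exact h1



set_option maxHeartbeats 2000000

/-- If `(a₁, a₂, a₃, a₄)` is a valid Schubert problem with sum `2s`, then
`K(a₁,a₂,a₃,a₄) = 1 + min{aᵢ, s − aⱼ : i, j = 1,…,4}` (here `n(a) − 1 = s`). -/
theorem kostka_four (a1 a2 a3 a4 s : ℕ)
    (h1 : 0 < a1) (h2 : 0 < a2) (h3 : 0 < a3) (h4 : 0 < a4)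
    (hsum : a1 + a2 + a3 + a4 = 2 * s)
    (hv1 : a1 ≤ s) (hv2 : a2 ≤ s) (hv3 : a3 ≤ s) (hv4 : a4 ≤ s) :
    kostka [a1, a2, a3, a4] =
      1 + min (min (min a1 a2) (min a3 a4))
              (min (min (s - a1) (s - a2)) (min (s - a3) (s - a4))) := by
  have hsum' : [a1, a2, a3, a4].sum = 2 * s := by simp; omega
  unfold kostka
  rw [hsum', if_pos (show 2 * s % 2 = 0 by omega), show 2 * s / 2 = s from by omega]
  have key : Nat.card {T : Fin 2 → Fin s → Fin 4 //
      (∀ r, Monotone (T r)) ∧ (∀ c, T 0 c < T 1 c) ∧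
      (∀ i : Fin 4, Nat.card {p : Fin 2 × Fin s // T p.1 p.2 = i}
        = [a1, a2, a3, a4].get i)}
      = (min (min a1 a2) (min (s - a3) (s - a4))) + 1 - (a1 + a2 - s) := by
    rw [show (min (min a1 a2) (min (s - a3) (s - a4))) + 1 - (a1 + a2 - s)
        = Nat.card (Set.Icc (a1 + a2 - s) (min (min a1 a2) (min (s - a3) (s - a4))) : Set ℕ)
      from by rw [Nat.card_eq_card_toFinset]; simp [Nat.card_Icc]]
    apply Nat.card_eq_of_bijective
      (f := fun T => (⟨cntLe (T.1 1) 1, by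
        obtain ⟨hq, -⟩ := tableau_det a1 a2 a3 a4 s hsum hv1 hv2 hv3 hv4
          T.1 T.2.1 T.2.2.1 T.2.2.2
        simp only [Set.mem_Icc]
        omega⟩ : Set.Icc (a1 + a2 - s) (min (min a1 a2) (min (s - a3) (s - a4)))))
    constructor
    · rintro T T' h
      have hh : cntLe (T.1 1) 1 = cntLe (T'.1 1) 1 := congrArg Subtype.val h
      obtain ⟨-, hT⟩ := tableau_det a1 a2 a3 a4 s hsum hv1 hv2 hv3 hv4
        T.1 T.2.1 T.2.2.1 T.2.2.2
      obtain ⟨-, hT'⟩ := tableau_det a1 a2 a3 a4 s hsum hv1 hv2 hv3 hv4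
        T'.1 T'.2.1 T'.2.2.1 T'.2.2.2
      exact Subtype.ext (by rw [hT, hT', hh])
    · rintro ⟨t, ht⟩
      simp only [Set.mem_Icc] at ht
      have hL : a1 + a2 ≤ s + t := by omega
      have ht1 : t ≤ a1 := by omega
      have ht2 : t ≤ a2 := by omega
      have ht3 : t + a3 ≤ s := by omega
      have ht4 : t + a4 ≤ s := by omega
      refine ⟨⟨Frow a1 a2 a4 s t, Frow_mono a1 a2 a4 s t,
        fun c => Frow_col a1 a2 a3 a4 s t hsum ht1 ht3 c,
        Frow_mem a1 a2 a3 a4 s t hsum hv1 hv4 hL ht1 ht2 ht3 ht4⟩, ?_⟩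
      exact Subtype.ext (Frow_cnt11 a1 a2 a4 s t ht4)
  have goal2 : (min (min a1 a2) (min (s - a3) (s - a4))) + 1 - (a1 + a2 - s)
      = 1 + min (min (min a1 a2) (min a3 a4))
              (min (min (s - a1) (s - a2)) (min (s - a3) (s - a4))) := by
    clear key hsum'
    omega
  show Nat.card {T : Fin 2 → Fin s → Fin 4 //
      (∀ r, Monotone (T r)) ∧ (∀ c, T 0 c < T 1 c) ∧
      (∀ i : Fin 4, Nat.card {p : Fin 2 × Fin s // T p.1 p.2 = i}
        = [a1, a2, a3, a4].get i)}
      = 1 + min (min (min a1 a2) (min a3 a4))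
              (min (min (s - a1) (s - a2)) (min (s - a3) (s - a4)))
  exact key.trans goal2
end

section
/- Suppose a_• = (b_1, …, b_μ, α, β, γ) is a reduced Schubert problem, where α ≤ β ≤ γ and α < γ. Then K(b_1, …, b_μ, α, β + γ) < K(b_1, …, b_μ, γ, β + α). -/
open Finset

lemma fin_filter_val_card (n : ℕ) (P : ℕ → Prop) [DecidablePred P] :
    (Finset.univ.filter fun c : Fin n => P c.val).card = ((Finset.range n).filter P).card := by
  rw [← Finset.card_image_of_injective (Finset.univ.filter fun c : Fin n => P c.val)
    Fin.val_injective]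
  congr 1
  ext x
  simp only [Finset.mem_image, Finset.mem_filter, Finset.mem_univ, true_and, Finset.mem_range]
  constructor
  · rintro ⟨c, hc, rfl⟩; exact ⟨c.isLt, hc⟩
  · rintro ⟨hx, hP⟩; exact ⟨⟨x, hx⟩, hP, rfl⟩

lemma fin_card_filter_Ico (n lo hi : ℕ) (h : hi ≤ n) :
    (Finset.univ.filter fun c : Fin n => lo ≤ c.val ∧ c.val < hi).card = hi - lo := by
  rw [fin_filter_val_card n (fun x => lo ≤ x ∧ x < hi)]
  have : (Finset.range n).filter (fun x => lo ≤ x ∧ x < hi) = Finset.Ico lo hi := by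
    ext x; simp only [Finset.mem_filter, Finset.mem_range, Finset.mem_Ico]; omega
  rw [this, Nat.card_Ico]

lemma fin_card_filter_le (n lo : ℕ) :
    (Finset.univ.filter fun c : Fin n => lo ≤ c.val).card = n - lo := by
  rw [fin_filter_val_card n (fun x => lo ≤ x)]
  have : (Finset.range n).filter (fun x => lo ≤ x) = Finset.Ico lo n := by
    ext x; simp only [Finset.mem_filter, Finset.mem_range, Finset.mem_Ico]; omega
  rw [this, Nat.card_Ico]

lemma mono_upper {n m : ℕ} (f : Fin n → Fin m) (hf : Monotone f) (v : Fin m)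
    (hmax : ∀ c, f c ≤ v) (k : ℕ)
    (hk : (Finset.univ.filter fun c => f c = v).card = k) (c : Fin n) :
    f c = v ↔ n - k ≤ c.val := by
  classical
  have hup : ∀ {x y : Fin n}, x ≤ y → f x = v → f y = v := by
    intro x y hxy hx
    exact le_antisymm (hmax _) (hx ▸ hf hxy)
  constructor
  · intro e
    have hsub : (Finset.univ.filter fun c' : Fin n => c.val ≤ c'.val) ⊆
        (Finset.univ.filter fun c' => f c' = v) := by
      intro x hx
      simp only [Finset.mem_filter, Finset.mem_univ, true_and] at hx ⊢
      exact hup (show c ≤ x from hx) e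
    have h1 := Finset.card_le_card hsub
    rw [fin_card_filter_le, hk] at h1
    have := c.isLt
    omega
  · intro hc
    by_contra hne
    have hsub : (Finset.univ.filter fun c' : Fin n => f c' = v) ⊆
        (Finset.univ.filter fun c' : Fin n => c.val + 1 ≤ c'.val) := by
      intro x hx
      simp only [Finset.mem_filter, Finset.mem_univ, true_and] at hx ⊢
      by_contra hlt
      push_neg at hlt
      exact hne (hup (show x ≤ c from by omega) hx)
    have h1 := Finset.card_le_card hsub
    rw [fin_card_filter_le, hk] at h1
    have := c.isLt
    omega

lemma card_prod_fin_two {s : ℕ} (Q : Fin 2 → Fin s → Prop) [∀ r c, Decidable (Q r c)] :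
    Nat.card {p : Fin 2 × Fin s // Q p.1 p.2} =
      (Finset.univ.filter fun c => Q 0 c).card + (Finset.univ.filter fun c => Q 1 c).card := by
  rw [Nat.card_eq_fintype_card, Fintype.card_subtype, Finset.card_filter,
    Fintype.sum_prod_type, Fin.sum_univ_two, Finset.card_filter, Finset.card_filter]


def IsTab (s m : ℕ) (f : Fin m → ℕ) (T : Fin 2 → Fin s → Fin m) : Prop :=
  (∀ r, Monotone (T r)) ∧ (∀ c, T 0 c < T 1 c) ∧
    ∀ i, Nat.card {p : Fin 2 × Fin s // T p.1 p.2 = i} = f i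

lemma kostka_eq_s8 (a : List ℕ) (s m : ℕ) (f : Fin m → ℕ) (hs : a.sum = 2 * s)
    (hm : a.length = m) (hf : ∀ i : Fin m, f i = a.get (Fin.cast hm.symm i)) :
    kostka a = Nat.card {T : Fin 2 → Fin s → Fin m // IsTab s m f T} := by
  subst hm
  have h2 : a.sum / 2 = s := by omega
  have h0 : a.sum % 2 = 0 := by omega
  have hf' : f = fun i => a.get i := by
    funext i; rw [hf i]; rfl
  simp only [kostka, if_pos h0, IsTab, hf']
  rw [h2]

def letterOf (L s : ℕ) (cum : ℕ → ℕ) (c : Fin s) : Fin (L+2) :=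
  ⟨((Finset.range (L+1)).filter fun j => cum (j+1) ≤ c.val).card, by
    have h := Finset.card_filter_le (Finset.range (L+1)) (fun j => cum (j+1) ≤ c.val)
    simp only [Finset.card_range] at h
    omega⟩

lemma letterOf_spec {L s : ℕ} {cum : ℕ → ℕ} (hc0 : cum 0 = 0) (hmono : Monotone cum)
    (htop : cum (L+2) = s) (c : Fin s) :
    cum (letterOf L s cum c).val ≤ c.val ∧ c.val < cum ((letterOf L s cum c).val + 1) := by
  classical
  set F := (Finset.range (L+1)).filter (fun j => cum (j+1) ≤ c.val) with hF
  have hval : (letterOf L s cum c).val = F.card := rfl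
  set k := F.card with hk
  have hkle : k ≤ L + 1 := by
    have h := Finset.card_filter_le (Finset.range (L+1)) (fun j => cum (j+1) ≤ c.val)
    simpa [← hF] using h
  rw [hval]
  constructor
  · rcases Nat.eq_zero_or_pos k with h0 | hpos
    · rw [h0, hc0]; exact Nat.zero_le _
    · by_contra hgt
      push_neg at hgt
      have hsub : F ⊆ Finset.range (k-1) := by
        intro j hj
        rw [hF, Finset.mem_filter, Finset.mem_range] at hj
        rw [Finset.mem_range]
        by_contra hge
        push_neg at hge
        have : cum k ≤ cum (j+1) := hmono (by omega)
        omega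
      have hcard := Finset.card_le_card hsub
      rw [Finset.card_range] at hcard
      omega
  · rcases Nat.lt_or_ge k (L+1) with hlt | hge
    · by_contra hle
      push_neg at hle
      have hsub : Finset.range (k+1) ⊆ F := by
        intro j hj
        rw [Finset.mem_range] at hj
        rw [hF, Finset.mem_filter, Finset.mem_range]
        exact ⟨by omega, le_trans (hmono (by omega)) hle⟩
      have hcard := Finset.card_le_card hsub
      rw [Finset.card_range] at hcard
      omega
    · have hk1 : k + 1 = L + 2 := by omega
      rw [hk1, htop]
      exact c.isLt

lemma letterOf_mono {L s : ℕ} (cum : ℕ → ℕ) : Monotone (letterOf L s cum) := by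
  intro c c' hcc
  rw [Fin.le_def]
  show ((Finset.range (L+1)).filter fun j => cum (j+1) ≤ c.val).card ≤
    ((Finset.range (L+1)).filter fun j => cum (j+1) ≤ c'.val).card
  apply Finset.card_le_card
  intro j hj
  rw [Finset.mem_filter] at hj ⊢
  exact ⟨hj.1, le_trans hj.2 hcc⟩

lemma letterOf_count {L s : ℕ} {cum : ℕ → ℕ} (hc0 : cum 0 = 0) (hmono : Monotone cum)
    (htop : cum (L+2) = s) (i : ℕ) (hi : i < L + 2) :
    (Finset.univ.filter fun c : Fin s => letterOf L s cum c = ⟨i, hi⟩).card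
      = cum (i+1) - cum i := by
  classical
  have hiff : ∀ c : Fin s, letterOf L s cum c = ⟨i, hi⟩ ↔ (cum i ≤ c.val ∧ c.val < cum (i+1)) := by
    intro c
    obtain ⟨h1, h2⟩ := letterOf_spec hc0 hmono htop c
    constructor
    · intro e; rw [e] at h1 h2; exact ⟨h1, h2⟩
    · rintro ⟨hlo, hhi⟩
      have hki : (letterOf L s cum c).val = i := by
        by_contra hne
        rcases Nat.lt_or_ge (letterOf L s cum c).val i with hlt | hge
        · have : cum ((letterOf L s cum c).val + 1) ≤ cum i := hmono (by omega)
          omega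
        · have : cum (i+1) ≤ cum ((letterOf L s cum c).val) := hmono (by omega)
          omega
      exact Fin.ext hki
  rw [Finset.filter_congr (fun c _ => hiff c)]
  exact fin_card_filter_Ico s (cum i) (cum (i+1)) (htop ▸ hmono (by omega))

lemma letter_lt {L s : ℕ} {cumD cumE : ℕ → ℕ} (hD0 : cumD 0 = 0) (hDm : Monotone cumD)
    (hDt : cumD (L+2) = s) (hE0 : cumE 0 = 0) (hEm : Monotone cumE) (hEt : cumE (L+2) = s)
    (hED : ∀ i, i ≤ L + 1 → cumE (i+1) ≤ cumD i) (c : Fin s) :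
    letterOf L s cumD c < letterOf L s cumE c := by
  obtain ⟨hD1, hD2⟩ := letterOf_spec hD0 hDm hDt c
  obtain ⟨hE1, hE2⟩ := letterOf_spec hE0 hEm hEt c
  rw [Fin.lt_def]
  by_contra hge
  push_neg at hge
  have hi : (letterOf L s cumE c).val ≤ L+1 := by
    have := (letterOf L s cumE c).isLt; omega
  have h3 : cumE ((letterOf L s cumE c).val + 1) ≤ cumD (letterOf L s cumE c).val := hED _ hi
  have h4 : cumD (letterOf L s cumE c).val ≤ cumD (letterOf L s cumD c).val := hDm hge
  omega

def pen (L : ℕ) : Fin (L+2) := ⟨L, by omega⟩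
def top2 (L : ℕ) : Fin (L+2) := ⟨L+1, by omega⟩

def Phi (s L α β γ : ℕ) (T : Fin 2 → Fin s → Fin (L+2)) : Fin 2 → Fin s → Fin (L+2) :=
  fun r c => if r = 1 ∧ s-β-γ ≤ c.val ∧ c.val < s-β-α then pen L else T r c

section PhiLemmas

variable {s L α β γ : ℕ} {T : Fin 2 → Fin s → Fin (L+2)}

lemma phi_row0 (c : Fin s) : Phi s L α β γ T 0 c = T 0 c :=
  if_neg (by rintro ⟨h01, -⟩; exact absurd h01 (by decide))

lemma phi_row1_in {c : Fin s} (h : s-β-γ ≤ c.val ∧ c.val < s-β-α) :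
    Phi s L α β γ T 1 c = pen L := if_pos ⟨rfl, h⟩

lemma phi_row1_out {c : Fin s} (h : ¬(s-β-γ ≤ c.val ∧ c.val < s-β-α)) :
    Phi s L α β γ T 1 c = T 1 c := if_neg (by rintro ⟨-, h2⟩; exact h h2)

lemma top_not_row0 (hC : ∀ c, T 0 c < T 1 c) (c : Fin s) : T 0 c ≠ top2 L := by
  intro h
  have h2 := hC c
  rw [Fin.lt_def, h] at h2
  have := (T 1 c).isLt
  simp only [top2] at h2
  omega

lemma cnt_split_s8 (T : Fin 2 → Fin s → Fin (L+2)) (i : Fin (L+2)) :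
    Nat.card {p : Fin 2 × Fin s // T p.1 p.2 = i} =
      (Finset.univ.filter fun c => T 0 c = i).card
        + (Finset.univ.filter fun c => T 1 c = i).card :=
  card_prod_fin_two (fun r c => T r c = i)

end PhiLemmas

section PhiMain

variable {s L α β γ : ℕ} {T : Fin 2 → Fin s → Fin (L+2)}

lemma tab_last_iff (hM : ∀ r, Monotone (T r)) (hC : ∀ c, T 0 c < T 1 c)
    (hK : Nat.card {p : Fin 2 × Fin s // T p.1 p.2 = top2 L} = β + γ) :
    ∀ c, T 1 c = top2 L ↔ s - (β + γ) ≤ c.val := by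
  classical
  have h0 : (Finset.univ.filter fun c => T 0 c = top2 L).card = 0 := by
    rw [Finset.card_eq_zero, Finset.filter_eq_empty_iff]
    intro c _
    exact top_not_row0 hC c
  have h1 : (Finset.univ.filter fun c => T 1 c = top2 L).card = β + γ := by
    have := (cnt_split_s8 T (top2 L)).symm.trans hK
    omega
  exact mono_upper (T 1) (hM 1) (top2 L)
    (fun c => by rw [Fin.le_def]; have := (T 1 c).isLt; simp only [top2]; omega)
    (β + γ) h1

lemma tab_pen_iff (hM : ∀ r, Monotone (T r)) (hC : ∀ c, T 0 c < T 1 c) :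
    ∀ c, T 0 c = pen L ↔ s - (Finset.univ.filter fun c => T 0 c = pen L).card ≤ c.val := by
  classical
  exact mono_upper (T 0) (hM 0) (pen L)
    (fun c => by
      rw [Fin.le_def]
      have h1 := (T 0 c).isLt
      have h2 := top_not_row0 hC c
      have h3 : (T 0 c).val ≠ L + 1 := fun h => h2 (Fin.ext h)
      simp only [pen]
      omega)
    _ rfl

lemma phi_valid (hL : 1 ≤ L) (hβ : 1 ≤ β) (hαγ : α < γ) (hβγs : β + γ ≤ s)
    (fA fB : Fin (L+2) → ℕ) (hAB : ∀ i : Fin (L+2), i.val < L → fA i = fB i)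
    (hA1 : fA (pen L) = α) (hA2 : fA (top2 L) = β + γ)
    (hB1 : fB (pen L) = γ) (hB2 : fB (top2 L) = β + α)
    (hT : IsTab s (L+2) fA T) : IsTab s (L+2) fB (Phi s L α β γ T) := by
  classical
  obtain ⟨hM, hC, hK⟩ := hT
  have hlast := tab_last_iff hM hC ((hK (top2 L)).trans hA2)
  set u := (Finset.univ.filter fun c => T 0 c = pen L).card with hu_def
  have hpen := tab_pen_iff (T := T) hM hC
  have hu : u + (Finset.univ.filter fun c => T 1 c = pen L).card = α := by
    have := (cnt_split_s8 T (pen L)).symm.trans ((hK (pen L)).trans hA1)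
    omega
  have huα : u ≤ α := by omega
  -- row-1 values below the region are not top
  refine ⟨?_, ?_, ?_⟩
  · -- monotone
    intro r
    have hr : r = 0 ∨ r = 1 := by
      rcases (by omega : r.val = 0 ∨ r.val = 1) with h | h
      · exact Or.inl (Fin.ext h)
      · exact Or.inr (Fin.ext h)
    rcases hr with rfl | rfl
    · intro c c' hcc
      rw [phi_row0, phi_row0]
      exact hM 0 hcc
    · intro c c' hcc
      rw [Fin.le_def] at hcc
      by_cases h1 : s-β-γ ≤ c.val ∧ c.val < s-β-α <;>
        by_cases h2 : s-β-γ ≤ c'.val ∧ c'.val < s-β-α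
      · rw [phi_row1_in h1, phi_row1_in h2]
      · rw [phi_row1_in h1, phi_row1_out h2, (hlast c').2 (by omega)]
        rw [Fin.le_def]
        simp only [pen, top2]
        omega
      · rw [phi_row1_out h1, phi_row1_in h2]
        have hne : T 1 c ≠ top2 L := fun h => by
          have := (hlast c).1 h
          omega
        have h3 : (T 1 c).val ≠ L + 1 := fun h => hne (Fin.ext h)
        have h4 := (T 1 c).isLt
        rw [Fin.le_def]
        simp only [pen]
        omega
      · rw [phi_row1_out h1, phi_row1_out h2]
        exact hM 1 (by rw [Fin.le_def]; exact hcc)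
  · -- column strict
    intro c
    by_cases h1 : s-β-γ ≤ c.val ∧ c.val < s-β-α
    · rw [phi_row0, phi_row1_in h1]
      have hnp : ¬ (s - u ≤ c.val) := by omega
      have hne1 : T 0 c ≠ pen L := fun h => hnp ((hpen c).1 h)
      have hne2 := top_not_row0 hC c
      have h3 : (T 0 c).val ≠ L := fun h => hne1 (Fin.ext h)
      have h4 : (T 0 c).val ≠ L + 1 := fun h => hne2 (Fin.ext h)
      have h5 := (T 0 c).isLt
      rw [Fin.lt_def]
      simp only [pen]
      omega
    · rw [phi_row0, phi_row1_out h1]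
      exact hC c
  · -- counts
    intro i
    rw [cnt_split_s8 (Phi s L α β γ T) i]
    have hrow0 : (Finset.univ.filter fun c => Phi s L α β γ T 0 c = i) =
        (Finset.univ.filter fun c => T 0 c = i) := by
      apply Finset.filter_congr
      intro c _
      rw [phi_row0]
    rw [hrow0]
    by_cases hiL : i.val < L
    · have hrow1 : (Finset.univ.filter fun c => Phi s L α β γ T 1 c = i) =
          (Finset.univ.filter fun c => T 1 c = i) := by
        apply Finset.filter_congr
        intro c _
        by_cases h1 : s-β-γ ≤ c.val ∧ c.val < s-β-α
        · rw [phi_row1_in h1]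
          have hne1 : pen L ≠ i := fun h => by
            have := congrArg Fin.val h
            simp only [pen] at this
            omega
          have hne2 : T 1 c ≠ i := fun h => by
            have h2 := (hlast c).2 (by omega)
            rw [h] at h2
            have := congrArg Fin.val h2
            simp only [top2] at this
            omega
          exact iff_of_false hne1 hne2
        · rw [phi_row1_out h1]
      rw [hrow1, ← hAB i hiL]
      exact (cnt_split_s8 T i).symm.trans (hK i)
    · by_cases hiP : i.val = L
      · have hi : i = pen L := Fin.ext (by simp only [pen]; omega)
        have hdisj : Disjoint (Finset.univ.filter fun c => T 1 c = pen L)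
            (Finset.univ.filter fun c : Fin s => s-β-γ ≤ c.val ∧ c.val < s-β-α) := by
          rw [Finset.disjoint_left]
          intro c hc1 hc2
          rw [Finset.mem_filter] at hc1 hc2
          have h2 := (hlast c).2 (by omega)
          rw [hc1.2] at h2
          have := congrArg Fin.val h2
          simp only [pen, top2] at this
          omega
        have hrow1 : (Finset.univ.filter fun c => Phi s L α β γ T 1 c = pen L) =
            (Finset.univ.filter fun c => T 1 c = pen L) ∪
              (Finset.univ.filter fun c : Fin s => s-β-γ ≤ c.val ∧ c.val < s-β-α) := by
          ext c
          simp only [Finset.mem_union, Finset.mem_filter, Finset.mem_univ, true_and]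
          by_cases h1 : s-β-γ ≤ c.val ∧ c.val < s-β-α
          · rw [phi_row1_in h1]
            exact ⟨fun _ => Or.inr h1, fun _ => rfl⟩
          · rw [phi_row1_out h1]
            exact ⟨fun h => Or.inl h, fun h => h.elim id (fun h2 => absurd h2 h1)⟩
        rw [hi, hrow1, Finset.card_union_of_disjoint hdisj,
          fin_card_filter_Ico s _ _ (by omega), hB1]
        omega
      · have hiT : i = top2 L := Fin.ext (by simp only [top2]; have := i.isLt; omega)
        have hrow0' : (Finset.univ.filter fun c => T 0 c = top2 L).card = 0 := by
          rw [Finset.card_eq_zero, Finset.filter_eq_empty_iff]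
          exact fun c _ => top_not_row0 hC c
        have hrow1 : (Finset.univ.filter fun c => Phi s L α β γ T 1 c = top2 L) =
            (Finset.univ.filter fun c : Fin s => s-β-α ≤ c.val) := by
          apply Finset.filter_congr
          intro c _
          by_cases h1 : s-β-γ ≤ c.val ∧ c.val < s-β-α
          · rw [phi_row1_in h1]
            have hne1 : pen L ≠ top2 L := fun h => by
              have := congrArg Fin.val h
              simp only [pen, top2] at this
              omega
            exact iff_of_false hne1 (by omega)
          · rw [phi_row1_out h1]
            constructor
            · intro h
              have := (hlast c).1 h
              omega
            · intro h
              exact (hlast c).2 (by omega)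
        rw [hiT, hrow0', hrow1, fin_card_filter_le, hB2]
        omega

end PhiMain

section Witness

variable (bs : List ℕ) (s α β : ℕ)

def cumD : ℕ → ℕ :=
  fun i => if i ≤ bs.length then min ((bs.take i).sum) (s-α-1) else s

def cumE (γ : ℕ) : ℕ → ℕ :=
  fun i => if i ≤ bs.length then (bs.take i).sum - (s-α-1)
    else if i = bs.length + 1 then s-β-α else s

variable {γ : ℕ}

lemma take_sum_le (i : ℕ) : (bs.take i).sum ≤ bs.sum := by
  have := List.sum_take_add_sum_drop bs i
  omega

lemma take_sum_succ {i : ℕ} (hi : i < bs.length) :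
    (bs.take (i+1)).sum = (bs.take i).sum + bs[i] := by
  rw [← List.take_concat_get' bs i hi, List.sum_append]
  simp

section WitnessFacts

variable {bs} {s α β}
variable (hb : ∀ x ∈ bs, x + γ ≤ s) (hsum : bs.sum + (α+β+γ) = 2*s)
  (hα : 1 ≤ α) (hβ : 1 ≤ β) (hαγ : α+1 ≤ γ) (hβγs : β + γ ≤ s)

include hsum hα hβ hαγ hβγs

lemma hts : s-α-1 ≤ bs.sum := by omega

lemma cumD_zero : cumD bs s α 0 = 0 := by simp [cumD]

lemma cumE_zero : cumE bs s α β γ 0 = 0 := by simp [cumE]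

lemma cumD_top : cumD bs s α (bs.length + 2) = s := by simp [cumD]

lemma cumE_top : cumE bs s α β γ (bs.length + 2) = s := by simp [cumE]

include hb

lemma bs_le (i : ℕ) (hi : i < bs.length) : bs[i] + γ ≤ s :=
  hb _ (List.getElem_mem hi)

lemma cumD_mono : Monotone (cumD bs s α) := by
  apply monotone_nat_of_le_succ
  intro i
  unfold cumD
  by_cases h1 : i + 1 ≤ bs.length
  · rw [if_pos h1, if_pos (by omega)]
    have := take_sum_succ bs (show i < bs.length by omega)
    omega
  · by_cases h2 : i ≤ bs.length
    · rw [if_pos h2, if_neg h1]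
      omega
    · rw [if_neg h2, if_neg (by omega)]

lemma cumE_mono : Monotone (cumE bs s α β γ) := by
  apply monotone_nat_of_le_succ
  intro i
  unfold cumE
  by_cases h1 : i + 1 ≤ bs.length
  · rw [if_pos h1, if_pos (by omega)]
    have := take_sum_succ bs (show i < bs.length by omega)
    omega
  · by_cases h2 : i ≤ bs.length
    · have hil : i = bs.length := by omega
      rw [if_pos h2, if_neg h1, if_pos (by omega)]
      have h3 := take_sum_le bs i
      have h4 : (bs.take i).sum = bs.sum := by rw [hil, List.take_length]
      omega
    · by_cases h3 : i = bs.length + 1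
      · rw [if_neg h2, if_pos h3, if_neg (by omega), if_neg (by omega)]
        omega
      · rw [if_neg h2, if_neg h3, if_neg (by omega), if_neg (by omega)]

lemma cumED (i : ℕ) (hi : i ≤ bs.length + 1) :
    cumE bs s α β γ (i+1) ≤ cumD bs s α i := by
  unfold cumD cumE
  by_cases h1 : i < bs.length
  · rw [if_pos (by omega), if_pos (by omega)]
    have h2 := take_sum_succ bs h1
    have h3 := take_sum_le bs (i+1)
    have h4 := bs_le hb hsum hα hβ hαγ hβγs i h1
    omega
  · by_cases h2 : i = bs.length
    · rw [if_neg (by omega), if_pos (by omega), if_pos (by omega)]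
      have h4 : (bs.take i).sum = bs.sum := by rw [h2, List.take_length]
      omega
    · have h3 : i = bs.length + 1 := by omega
      rw [if_neg (by omega), if_neg (by omega), if_neg (by omega)]


lemma t0_isTab (fB : Fin (bs.length+2) → ℕ)
    (hB0 : ∀ (iv : ℕ) (h : iv < bs.length), fB ⟨iv, by omega⟩ = bs[iv])
    (hB1 : fB (pen bs.length) = γ) (hB2 : fB (top2 bs.length) = β+α) :
    IsTab s (bs.length+2) fB
      (fun r => if r = 0 then letterOf bs.length s (cumD bs s α)
        else letterOf bs.length s (cumE bs s α β γ)) := by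
  classical
  have hD0 := cumD_zero (bs := bs) (s := s) (α := α) (β := β) (γ := γ) hsum hα hβ hαγ hβγs
  have hE0 := cumE_zero (bs := bs) (s := s) (α := α) (β := β) (γ := γ) hsum hα hβ hαγ hβγs
  have hDt := cumD_top (bs := bs) (s := s) (α := α) (β := β) (γ := γ) hsum hα hβ hαγ hβγs
  have hEt := cumE_top (bs := bs) (s := s) (α := α) (β := β) (γ := γ) hsum hα hβ hαγ hβγs
  have hDm := cumD_mono (γ := γ) hb hsum hα hβ hαγ hβγs
  have hEm := cumE_mono hb hsum hα hβ hαγ hβγs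
  have hED := cumED hb hsum hα hβ hαγ hβγs
  set T := (fun r => if r = 0 then letterOf bs.length s (cumD bs s α)
        else letterOf bs.length s (cumE bs s α β γ) : Fin 2 → Fin s → Fin (bs.length+2))
    with hT
  have e0 : T 0 = letterOf bs.length s (cumD bs s α) := if_pos rfl
  have e1 : T 1 = letterOf bs.length s (cumE bs s α β γ) := if_neg (by decide)
  refine ⟨?_, ?_, ?_⟩
  · intro r
    have hr : r = 0 ∨ r = 1 := by
      rcases (by omega : r.val = 0 ∨ r.val = 1) with h | h
      · exact Or.inl (Fin.ext h)
      · exact Or.inr (Fin.ext h)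
    rcases hr with rfl | rfl
    · rw [e0]; exact letterOf_mono _
    · rw [e1]; exact letterOf_mono _
  · intro c
    rw [e0, e1]
    exact letter_lt hD0 hDm hDt hE0 hEm hEt hED c
  · intro i
    rw [cnt_split_s8 T i, e0, e1]
    have h0 := letterOf_count hD0 hDm hDt i.val i.isLt
    have h1 := letterOf_count hE0 hEm hEt i.val i.isLt
    rw [Fin.eta] at h0 h1
    rw [h0, h1]
    by_cases hiL : i.val < bs.length
    · have hstep := take_sum_succ bs hiL
      have hle := take_sum_le bs (i.val+1)
      have hbi := bs_le hb hsum hα hβ hαγ hβγs i.val hiL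
      have h2 := hB0 i.val hiL
      rw [Fin.eta] at h2
      rw [h2]
      have hD1 : cumD bs s α (i.val+1) = min ((bs.take (i.val+1)).sum) (s-α-1) := by
        unfold cumD; rw [if_pos (by omega)]
      have hD2 : cumD bs s α i.val = min ((bs.take i.val).sum) (s-α-1) := by
        unfold cumD; rw [if_pos (by omega)]
      have hE1 : cumE bs s α β γ (i.val+1) = (bs.take (i.val+1)).sum - (s-α-1) := by
        unfold cumE; rw [if_pos (by omega)]
      have hE2 : cumE bs s α β γ i.val = (bs.take i.val).sum - (s-α-1) := by
        unfold cumE; rw [if_pos (by omega)]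
      rw [hD1, hD2, hE1, hE2]
      omega
    · have h4 : (bs.take i.val).sum = bs.sum := by
        rw [List.take_of_length_le (by omega)]
      by_cases hiP : i.val = bs.length
      · have hfB : fB i = γ := by rw [show i = pen bs.length from Fin.ext hiP, hB1]
        have hD1 : cumD bs s α (i.val+1) = s := by unfold cumD; rw [if_neg (by omega)]
        have hD2 : cumD bs s α i.val = min bs.sum (s-α-1) := by
          unfold cumD; rw [if_pos (by omega), h4]
        have hE1 : cumE bs s α β γ (i.val+1) = s-β-α := by
          unfold cumE; rw [if_neg (by omega), if_pos (by omega)]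
        have hE2 : cumE bs s α β γ i.val = bs.sum - (s-α-1) := by
          unfold cumE; rw [if_pos (by omega), h4]
        rw [hD1, hD2, hE1, hE2, hfB]
        omega
      · have hiT : i.val = bs.length + 1 := by have := i.isLt; omega
        have hfB : fB i = β+α := by rw [show i = top2 bs.length from Fin.ext hiT, hB2]
        have hD1 : cumD bs s α (i.val+1) = s := by unfold cumD; rw [if_neg (by omega)]
        have hD2 : cumD bs s α i.val = s := by unfold cumD; rw [if_neg (by omega)]
        have hE1 : cumE bs s α β γ (i.val+1) = s := by
          unfold cumE; rw [if_neg (by omega), if_neg (by omega)]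
        have hE2 : cumE bs s α β γ i.val = s-β-α := by
          unfold cumE; rw [if_neg (by omega), if_pos (by omega)]
        rw [hD1, hD2, hE1, hE2, hfB]
        omega

lemma t0_not_pen (hs3 : s-β-γ < s) :
    (fun (r : Fin 2) => if r = 0 then letterOf bs.length s (cumD bs s α)
        else letterOf bs.length s (cumE bs s α β γ)) 1 ⟨s-β-γ, hs3⟩ ≠ pen bs.length := by
  have hE0 := cumE_zero (bs := bs) (s := s) (α := α) (β := β) (γ := γ) hsum hα hβ hαγ hβγs
  have hEt := cumE_top (bs := bs) (s := s) (α := α) (β := β) (γ := γ) hsum hα hβ hαγ hβγs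
  have hEm := cumE_mono hb hsum hα hβ hαγ hβγs
  have e1 : (fun (r : Fin 2) => if r = 0 then letterOf bs.length s (cumD bs s α)
        else letterOf bs.length s (cumE bs s α β γ)) 1
      = letterOf bs.length s (cumE bs s α β γ) := if_neg (by decide)
  rw [e1]
  intro h
  have hspec := (letterOf_spec hE0 hEm hEt ⟨s-β-γ, hs3⟩).1
  rw [h] at hspec
  have hEL : cumE bs s α β γ bs.length = bs.sum - (s-α-1) := by
    unfold cumE; rw [if_pos (le_refl _), List.take_length]
  simp only [pen] at hspec
  omega

end WitnessFacts

end Witness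

lemma phi_inj {s L α β γ : ℕ} (fA : Fin (L+2) → ℕ) (hA2 : fA (top2 L) = β + γ)
    {T T' : Fin 2 → Fin s → Fin (L+2)} (hT : IsTab s (L+2) fA T) (hT' : IsTab s (L+2) fA T')
    (h : Phi s L α β γ T = Phi s L α β γ T') : T = T' := by
  obtain ⟨hM, hC, hK⟩ := hT
  obtain ⟨hM', hC', hK'⟩ := hT'
  have hlast := tab_last_iff hM hC ((hK (top2 L)).trans hA2)
  have hlast' := tab_last_iff hM' hC' ((hK' (top2 L)).trans hA2)
  funext r c
  have hrc := congrFun (congrFun h r) c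
  by_cases hreg : r = 1 ∧ s-β-γ ≤ c.val ∧ c.val < s-β-α
  · obtain ⟨rfl, h2⟩ := hreg
    rw [(hlast c).2 (by omega), (hlast' c).2 (by omega)]
  · simp only [Phi] at hrc
    rw [if_neg hreg, if_neg hreg] at hrc
    exact hrc

lemma get_helper (bs : List ℕ) (x y : ℕ) (f : Fin (bs.length + 2) → ℕ)
    (hf : f = fun i => if h : i.val < bs.length then bs[i.val] else if i.val = bs.length then x else y)
    (hlen : (bs ++ [x, y]).length = bs.length + 2) :
    ∀ i : Fin (bs.length + 2), f i = (bs ++ [x, y]).get (Fin.cast hlen.symm i) := by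
  intro i
  rw [List.get_eq_getElem, hf]
  simp only [Fin.coe_cast]
  by_cases h : i.val < bs.length
  · rw [dif_pos h, List.getElem_append_left h]
  · rw [dif_neg h]
    rw [List.getElem_append_right (by omega)]
    by_cases h2 : i.val = bs.length
    · rw [if_pos h2]
      have : i.val - bs.length = 0 := by omega
      simp [this]
    · rw [if_neg h2]
      have hiv := i.isLt
      have : i.val - bs.length = 1 := by omega
      simp [this]


/-- If `(b₁,…,b_μ, α, β, γ)` is a reduced Schubert problem with
`α ≤ β ≤ γ` and `α < γ`, then
`K(b₁,…,b_μ, α, β + γ) < K(b₁,…,b_μ, γ, β + α)`. -/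
theorem kostka_unequal_inequality (bs : List ℕ) (α β γ s : ℕ)
    (hpos : ∀ x ∈ bs ++ [α, β, γ], 0 < x)
    (hsum : (bs ++ [α, β, γ]).sum = 2 * s)
    (hreduced : (bs ++ [α, β, γ]).Pairwise (fun x y => x + y ≤ s))
    (hαβ : α ≤ β) (hβγ : β ≤ γ) (hαγ : α < γ) :
    kostka (bs ++ [α, β + γ]) < kostka (bs ++ [γ, β + α]) := by
  classical
  have hα : 0 < α := hpos α (by simp)
  have hβp : 0 < β := hpos β (by simp)
  have hγp : 0 < γ := hpos γ (by simp)
  rw [List.pairwise_append] at hreduced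
  obtain ⟨hred1, hred2, hred3⟩ := hreduced
  have hpair : α + β ≤ s ∧ α + γ ≤ s ∧ β + γ ≤ s := by
    rw [List.pairwise_cons, List.pairwise_cons] at hred2
    refine ⟨hred2.1 β (by simp), hred2.1 γ (by simp), hred2.2.1 γ (by simp)⟩
  have hβγs : β + γ ≤ s := hpair.2.2
  have hbγ : ∀ x ∈ bs, x + γ ≤ s := fun x hx => hred3 x hx γ (by simp)
  have hsums : bs.sum + (α + β + γ) = 2 * s := by
    simp only [List.sum_append, List.sum_cons, List.sum_nil] at hsum
    omega
  have hL1 : 1 ≤ bs.length := by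
    rcases bs with _ | ⟨b, bs'⟩
    · simp only [List.sum_nil] at hsums
      omega
    · simp
  set fA : Fin (bs.length+2) → ℕ :=
    fun i => if h : i.val < bs.length then bs[i.val] else if i.val = bs.length then α else β+γ
    with hfA_def
  set fB : Fin (bs.length+2) → ℕ :=
    fun i => if h : i.val < bs.length then bs[i.val] else if i.val = bs.length then γ else β+α
    with hfB_def
  have hsumA : (bs ++ [α, β+γ]).sum = 2*s := by
    simp only [List.sum_append, List.sum_cons, List.sum_nil]
    omega
  have hsumB : (bs ++ [γ, β+α]).sum = 2*s := by
    simp only [List.sum_append, List.sum_cons, List.sum_nil]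
    omega
  have hlenA : (bs ++ [α, β+γ]).length = bs.length+2 := by simp
  have hlenB : (bs ++ [γ, β+α]).length = bs.length+2 := by simp
  rw [kostka_eq_s8 _ s (bs.length+2) fA hsumA hlenA (get_helper bs α (β+γ) fA hfA_def hlenA),
    kostka_eq_s8 _ s (bs.length+2) fB hsumB hlenB (get_helper bs γ (β+α) fB hfB_def hlenB)]
  rw [Nat.card_eq_fintype_card, Nat.card_eq_fintype_card]
  have hAB : ∀ i : Fin (bs.length+2), i.val < bs.length → fA i = fB i := by
    intro i h
    rw [hfA_def, hfB_def]
    simp only [dif_pos h]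
  have hA1 : fA (pen bs.length) = α := by
    rw [hfA_def]
    simp [pen]
  have hA2 : fA (top2 bs.length) = β + γ := by
    rw [hfA_def]
    simp [top2]
  have hB1 : fB (pen bs.length) = γ := by
    rw [hfB_def]
    simp [pen]
  have hB2 : fB (top2 bs.length) = β + α := by
    rw [hfB_def]
    simp [top2]
  have hWtab := t0_isTab hbγ hsums hα hβp hαγ hβγs fB
    (fun iv h => by rw [hfB_def]; simp only [dif_pos h]) hB1 hB2
  refine Fintype.card_lt_of_injective_of_notMem
    (fun T : {T // IsTab s (bs.length+2) fA T} =>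
      (⟨Phi s bs.length α β γ T.1,
        phi_valid hL1 hβp hαγ hβγs fA fB hAB hA1 hA2 hB1 hB2 T.2⟩ :
        {T // IsTab s (bs.length+2) fB T}))
    ?_ (b := ⟨_, hWtab⟩) ?_
  · intro T T' h
    exact Subtype.ext (phi_inj fA hA2 T.2 T'.2 (congrArg Subtype.val h))
  · intro hmem
    obtain ⟨⟨T, hT⟩, hEq⟩ := hmem
    have hval := congrArg Subtype.val hEq
    simp only at hval
    have hc0s : s - β - γ < s := by omega
    have h1 : Phi s bs.length α β γ T 1 ⟨s-β-γ, hc0s⟩ = pen bs.length :=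
      phi_row1_in ⟨le_refl _, by exact (by omega : s - β - γ < s - β - α)⟩
    have h2 := t0_not_pen hbγ hsums hα hβp hαγ hβγs hc0s
    exact h2 ((congrFun (congrFun hval 1) ⟨s-β-γ, hc0s⟩).symm.trans h1)
end
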